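/- arXiv:1602.01820 — 4 statements merged into one kernel-verified Lean document; each statement's English description precedes it below -/
import Mathlib

section
/- For every integer N ≥ 1 there exists a family of real coefficients Ω(N, r; α₀, …, α_r), indexed by integers 0 ≤ r ≤ N and tuples of nonnegative integers (α₀, …, α_r) with α₀ + ⋯ + α_r = N − r, satisfying |Ω(N, r; α₀, …, α_r)| ≤ 3^N (N+1)!, such that the following identity holds: for every open set U ⊆ ℝ³, every smooth real-valued Φ on U with ∂₁Φ nonvanishing on U, and every smooth h : U → ℂ, one has (D′)^N h = Σ_{r=0}^{N} Σ_{α₀+⋯+α_r = N−r} Ω(N, r; α₀, …, α_r) · ∂₁^{α₀} h · (∂₁^{α₁+2}Φ ⋯ ∂₁^{α_r+2}Φ) / (∂₁Φ)^{r+N}, where D′ is the operator D′u := −∂₁(u / ∂₁Φ). -/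
noncomputable section

abbrev E3 : Type := EuclideanSpace ℝ (Fin 3)

/-- The partial derivative `∂₁` acting on complex-valued functions on `ℝ³`. -/
noncomputable def pd1C (f : E3 → ℂ) : E3 → ℂ :=
  fun x => fderiv ℝ f x (EuclideanSpace.single 0 1)

/-- The partial derivative `∂₁` acting on real-valued functions on `ℝ³`. -/
noncomputable def pd1R (f : E3 → ℝ) : E3 → ℝ :=
  fun x => fderiv ℝ f x (EuclideanSpace.single 0 1)

/-- The operator `D′u := −∂₁(u / ∂₁Φ)`, the formal adjoint of `Du = ∂₁u/∂₁Φ`. -/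
noncomputable def Dadj (Φ : E3 → ℝ) (u : E3 → ℂ) : E3 → ℂ :=
  fun x => -(pd1C (fun y => u y / ((pd1R Φ y : ℝ) : ℂ)) x)

section Coeffs



def Cpart (W : (r : ℕ) → (Fin (r + 1) → ℕ) → ℝ) (N : ℕ) : (r : ℕ) → (Fin (r + 1) → ℕ) → ℝ
  | 0, _ => 0
  | (r' + 1), α =>
      if α (Fin.last (r' + 1)) = 0 then ((r' + 1 + N : ℕ) : ℝ) * W r' (Fin.init α) else 0

def Ωc : ℕ → (r : ℕ) → (Fin (r + 1) → ℕ) → ℝ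
  | 0 => fun r _ => if r = 0 then 1 else 0
  | (N + 1) => fun r α =>
      (if 1 ≤ α 0 then -Ωc N r (Function.update α 0 (α 0 - 1)) else 0)
      + (∑ q : Fin r, if 1 ≤ α q.succ then -Ωc N r (Function.update α q.succ (α q.succ - 1)) else 0)
      + Cpart (Ωc N) N r α

lemma Cpart_le {W : (r : ℕ) → (Fin (r + 1) → ℕ) → ℝ} {N : ℕ} {M : ℝ}
    (hW : ∀ r α, |W r α| ≤ M) (r : ℕ) (α : Fin (r + 1) → ℕ) (hr : r ≤ N + 1) (hM : 0 ≤ M) :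
    |Cpart W N r α| ≤ (2 * N + 1) * M := by
  match r, α with
  | 0, α =>
      simp only [Cpart, abs_zero]
      positivity
  | (r' + 1), α =>
      simp only [Cpart]
      split
      · rw [abs_mul, Nat.abs_cast]
        apply mul_le_mul _ (hW _ _) (abs_nonneg _) (by positivity)
        have : (r':ℝ) ≤ N := by exact_mod_cast Nat.lt_succ_iff.mp (by omega)
        push_cast
        linarith
      · rw [abs_zero]
        positivity

lemma Ωc_eq_zero : ∀ N r, N < r → ∀ α, Ωc N r α = 0 := by
  intro N
  induction N with
  | zero => intro r hr α; simp only [Ωc]; rw [if_neg]; omega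
  | succ N ih =>
      intro r hr α
      simp only [Ωc]
      have h1 : ∀ β : Fin (r+1) → ℕ, Ωc N r β = 0 := ih r (by omega)
      have hC : Cpart (Ωc N) N r α = 0 := by
        match r, α with
        | 0, α => rfl
        | (r' + 1), α =>
            simp only [Cpart]
            rw [ih r' (by omega), mul_zero, ite_self]
      rw [hC]
      simp [h1]

lemma Ωc_bound : ∀ N r α, |Ωc N r α| ≤ 3 ^ N * (Nat.factorial (N + 1) : ℝ) := by
  intro N
  induction N with
  | zero => intro r α; simp only [Ωc]; split <;> simp [Nat.factorial]
  | succ N ih =>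
      intro r α
      have hM : (0:ℝ) ≤ 3 ^ N * (Nat.factorial (N + 1) : ℝ) := by positivity
      by_cases hr : r ≤ N + 1
      · set M := 3 ^ N * (Nat.factorial (N + 1) : ℝ) with hMdef
        simp only [Ωc]
        have hA : |if 1 ≤ α 0 then -Ωc N r (Function.update α 0 (α 0 - 1)) else 0| ≤ M := by
          split
          · rw [abs_neg]; exact ih _ _
          · simpa using hM
        have hB : |∑ q : Fin r, if 1 ≤ α q.succ then
            -Ωc N r (Function.update α q.succ (α q.succ - 1)) else 0| ≤ (N + 1) * M := by
          calc |∑ q : Fin r, if 1 ≤ α q.succ then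
              -Ωc N r (Function.update α q.succ (α q.succ - 1)) else 0|
              ≤ ∑ q : Fin r, |if 1 ≤ α q.succ then
                -Ωc N r (Function.update α q.succ (α q.succ - 1)) else 0| :=
                Finset.abs_sum_le_sum_abs _ _
            _ ≤ ∑ _q : Fin r, M := by
                apply Finset.sum_le_sum; intro q _
                split
                · rw [abs_neg]; exact ih _ _
                · simpa using hM
            _ = r * M := by simp [mul_comm]
            _ ≤ (N + 1) * M := by
                apply mul_le_mul_of_nonneg_right _ hM; exact_mod_cast hr
        have hC : |Cpart (Ωc N) N r α| ≤ (2 * N + 1) * M := Cpart_le ih r α hr hM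
        calc |_ + _ + Cpart (Ωc N) N r α| ≤ M + (N + 1) * M + (2 * N + 1) * M := by
              refine (abs_add_le _ _).trans ?_
              gcongr
              exact (abs_add_le _ _).trans (by gcongr)
          _ = (3 * N + 3) * M := by ring
          _ ≤ 3 ^ (N + 1) * (Nat.factorial (N + 1 + 1) : ℝ) := by
              rw [hMdef]
              have : (Nat.factorial (N + 2) : ℝ) = (N + 2) * Nat.factorial (N + 1) := by
                rw [Nat.factorial_succ]; push_cast; ring
              rw [this]
              have h3 : (3 * (N:ℝ) + 3) ≤ 3 * (N + 2) := by linarith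
              calc (3 * (N:ℝ) + 3) * (3 ^ N * (Nat.factorial (N + 1) : ℝ))
                  ≤ (3 * ((N:ℝ) + 2)) * (3 ^ N * (Nat.factorial (N + 1) : ℝ)) := by
                    apply mul_le_mul_of_nonneg_right h3 hM
                _ = 3 ^ (N + 1) * ((N + 2) * (Nat.factorial (N + 1) : ℝ)) := by ring
      · rw [Ωc_eq_zero (N + 1) r (by omega), abs_zero]
        positivity

end Coeffs

section Helpers


variable {U : Set E3} {x : E3}

lemma pd1R_contDiffOn {f : E3 → ℝ} (hU : IsOpen U) (hf : ContDiffOn ℝ (⊤:ℕ∞) f U) :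
    ContDiffOn ℝ (⊤:ℕ∞) (pd1R f) U :=
  (hf.fderiv_of_isOpen hU (by simp)).clm_apply contDiffOn_const

lemma pd1C_contDiffOn {f : E3 → ℂ} (hU : IsOpen U) (hf : ContDiffOn ℝ (⊤:ℕ∞) f U) :
    ContDiffOn ℝ (⊤:ℕ∞) (pd1C f) U :=
  (hf.fderiv_of_isOpen hU (by simp)).clm_apply contDiffOn_const

lemma pd1R_iter_contDiffOn {f : E3 → ℝ} (hU : IsOpen U) (hf : ContDiffOn ℝ (⊤:ℕ∞) f U) (k : ℕ) :
    ContDiffOn ℝ (⊤:ℕ∞) (pd1R^[k] f) U := by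
  induction k with
  | zero => exact hf
  | succ k ih => rw [Function.iterate_succ_apply']; exact pd1R_contDiffOn hU ih

lemma pd1C_iter_contDiffOn {f : E3 → ℂ} (hU : IsOpen U) (hf : ContDiffOn ℝ (⊤:ℕ∞) f U) (k : ℕ) :
    ContDiffOn ℝ (⊤:ℕ∞) (pd1C^[k] f) U := by
  induction k with
  | zero => exact hf
  | succ k ih => rw [Function.iterate_succ_apply']; exact pd1C_contDiffOn hU ih

lemma diffAtR {f : E3 → ℝ} (hU : IsOpen U) (hf : ContDiffOn ℝ (⊤:ℕ∞) f U) (hx : x ∈ U) :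
    DifferentiableAt ℝ f x :=
  (hf.differentiableOn (by simp)).differentiableAt (hU.mem_nhds hx)

lemma diffAtC {f : E3 → ℂ} (hU : IsOpen U) (hf : ContDiffOn ℝ (⊤:ℕ∞) f U) (hx : x ∈ U) :
    DifferentiableAt ℝ f x :=
  (hf.differentiableOn (by simp)).differentiableAt (hU.mem_nhds hx)

lemma pd1C_congr {f g : E3 → ℂ} (hU : IsOpen U) (hx : x ∈ U) (hfg : ∀ y ∈ U, f y = g y) :
    pd1C f x = pd1C g x := by
  unfold pd1C
  congr 1
  exact Filter.EventuallyEq.fderiv_eq (Filter.eventuallyEq_of_mem (hU.mem_nhds hx) hfg)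

lemma pd1C_sum {ι : Type*} {s : Finset ι} {f : ι → E3 → ℂ}
    (hf : ∀ i ∈ s, DifferentiableAt ℝ (f i) x) :
    pd1C (fun y => ∑ i ∈ s, f i y) x = ∑ i ∈ s, pd1C (f i) x := by
  unfold pd1C
  rw [fderiv_fun_sum hf]
  simp

lemma pd1C_const_mul {f : E3 → ℂ} (c : ℂ) (hf : DifferentiableAt ℝ f x) :
    pd1C (fun y => c * f y) x = c * pd1C f x := by
  unfold pd1C
  rw [fderiv_const_mul hf]
  simp

lemma pd1C_mul {f g : E3 → ℂ} (hf : DifferentiableAt ℝ f x) (hg : DifferentiableAt ℝ g x) :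
    pd1C (fun y => f y * g y) x = pd1C f x * g x + f x * pd1C g x := by
  unfold pd1C
  rw [fderiv_fun_mul hf hg]
  simp
  ring

lemma pd1C_ofReal {g : E3 → ℝ} (hg : DifferentiableAt ℝ g x) :
    pd1C (fun y => ((g y : ℝ) : ℂ)) x = ((pd1R g x : ℝ) : ℂ) := by
  unfold pd1C pd1R
  have : (fun y => ((g y : ℝ) : ℂ)) = ⇑Complex.ofRealCLM ∘ g := rfl
  rw [this, fderiv_comp x Complex.ofRealCLM.differentiable.differentiableAt hg,
    ContinuousLinearMap.fderiv]
  simp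

lemma pd1C_inv {c : E3 → ℂ} (hc : DifferentiableAt ℝ c x) (hcx : c x ≠ 0) :
    pd1C (fun y => (c y)⁻¹) x = -(pd1C c x) / c x ^ 2 := by
  unfold pd1C
  have : (fun y => (c y)⁻¹) = Inv.inv ∘ c := rfl
  rw [this, fderiv_comp x (differentiableAt_inv hcx) hc, fderiv_inv' hcx]
  simp only [ContinuousLinearMap.coe_comp', Function.comp_apply,
    ContinuousLinearMap.neg_apply, ContinuousLinearMap.mulLeftRight_apply]
  rw [div_eq_mul_inv]
  ring

lemma pd1C_pow {c : E3 → ℂ} (hc : DifferentiableAt ℝ c x) (m : ℕ) :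
    pd1C (fun y => c y ^ m) x = m * c x ^ (m - 1) * pd1C c x := by
  induction m with
  | zero => simp [pd1C]
  | succ m ih =>
      have heq : (fun y => c y ^ (m + 1)) = fun y => c y * c y ^ m := by
        funext y; rw [pow_succ]; ring
      rw [heq, pd1C_mul hc (hc.fun_pow m), ih]
      cases m with
      | zero => simp
      | succ m =>
          have : c x * (↑(m + 1) * c x ^ (m + 1 - 1) * pd1C c x)
              = ↑(m + 1) * c x ^ (m + 1) * pd1C c x := by
            simp only [Nat.add_sub_cancel]
            ring
          rw [this]
          push_cast
          ring_nf

lemma pd1C_div_pow {f c : E3 → ℂ} (hf : DifferentiableAt ℝ f x) (hc : DifferentiableAt ℝ c x)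
    (hcx : c x ≠ 0) (m : ℕ) :
    pd1C (fun y => f y / c y ^ m) x
      = pd1C f x / c x ^ m - m * f x * pd1C c x / c x ^ (m + 1) := by
  have heq : (fun y => f y / c y ^ m) = fun y => f y * (c y ^ m)⁻¹ := by
    funext y; rw [div_eq_mul_inv]
  rw [heq, pd1C_mul hf ((hc.fun_pow m).fun_inv (pow_ne_zero m hcx)),
    pd1C_inv (hc.fun_pow m) (pow_ne_zero m hcx), pd1C_pow hc m]
  cases m with
  | zero => simp
  | succ m =>
      have h1 : c x ^ (m + 1) ≠ 0 := pow_ne_zero _ hcx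
      have h2 : c x ^ (m + 1 + 1) ≠ 0 := pow_ne_zero _ hcx
      simp only [Nat.add_sub_cancel]
      field_simp
      ring


end Helpers

section Sums



lemma sum_update_add {k : ℕ} (α : Fin k → ℕ) (j : Fin k) (v : ℕ) :
    (∑ i, Function.update α j v i) + α j = (∑ i, α i) + v := by
  rw [Finset.sum_update_of_mem (Finset.mem_univ j), ← Finset.erase_eq,
    ← Finset.sum_erase_add Finset.univ α (Finset.mem_univ j)]
  omega

lemma update_dec_inc {k : ℕ} (α : Fin k → ℕ) (j : Fin k) (h : 1 ≤ α j) :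
    Function.update (Function.update α j (α j - 1)) j
      (Function.update α j (α j - 1) j + 1) = α := by
  funext i
  rcases eq_or_ne i j with rfl | hij
  · simp only [Function.update_self]
    omega
  · simp only [Function.update_of_ne hij]

lemma update_inc_dec {k : ℕ} (α : Fin k → ℕ) (j : Fin k) :
    Function.update (Function.update α j (α j + 1)) j
      (Function.update α j (α j + 1) j - 1) = α := by
  funext i
  rcases eq_or_ne i j with rfl | hij
  · simp only [Function.update_self]
    omega
  · simp only [Function.update_of_ne hij]

lemma sum_dec {r n : ℕ} (j : Fin (r + 1)) (f : (Fin (r + 1) → ℕ) → ℂ) :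
    (∑ α ∈ Finset.Nat.antidiagonalTuple (r + 1) (n + 1),
        if 1 ≤ α j then f (Function.update α j (α j - 1)) else 0)
      = ∑ α ∈ Finset.Nat.antidiagonalTuple (r + 1) n, f α := by
  rw [← Finset.sum_filter]
  refine Finset.sum_nbij' (fun α => Function.update α j (α j - 1))
    (fun α => Function.update α j (α j + 1)) ?_ ?_ ?_ ?_ ?_
  · intro α hα
    rw [Finset.mem_filter, Finset.Nat.mem_antidiagonalTuple] at hα
    rw [Finset.Nat.mem_antidiagonalTuple]
    have := sum_update_add α j (α j - 1)
    omega
  · intro α hα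
    rw [Finset.Nat.mem_antidiagonalTuple] at hα
    rw [Finset.mem_filter, Finset.Nat.mem_antidiagonalTuple]
    have := sum_update_add α j (α j + 1)
    refine ⟨by omega, ?_⟩
    rw [Function.update_self]
    omega
  · intro α hα
    rw [Finset.mem_filter] at hα
    exact update_dec_inc α j hα.2
  · intro α _
    exact update_inc_dec α j
  · intro α _
    rfl

lemma sum_snoc {k m : ℕ} (f : (Fin (k + 2) → ℕ) → ℂ) :
    (∑ α ∈ Finset.Nat.antidiagonalTuple (k + 2) m,
        if α (Fin.last (k + 1)) = 0 then f α else 0)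
      = ∑ α ∈ Finset.Nat.antidiagonalTuple (k + 1) m, f (Fin.snoc α 0) := by
  rw [← Finset.sum_filter]
  refine Finset.sum_nbij' (fun α => Fin.init α) (fun α => Fin.snoc α 0) ?_ ?_ ?_ ?_ ?_
  · intro α hα
    rw [Finset.mem_filter, Finset.Nat.mem_antidiagonalTuple] at hα
    rw [Finset.Nat.mem_antidiagonalTuple]
    obtain ⟨h1, h2⟩ := hα
    rw [Fin.sum_univ_castSucc, h2, add_zero] at h1
    rw [← h1]
    rfl
  · intro α hα
    rw [Finset.Nat.mem_antidiagonalTuple] at hα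
    rw [Finset.mem_filter, Finset.Nat.mem_antidiagonalTuple]
    refine ⟨?_, Fin.snoc_last _ _⟩
    rw [Fin.sum_univ_castSucc, Fin.snoc_last, add_zero, ← hα]
    exact Finset.sum_congr rfl fun i _ => Fin.snoc_castSucc _ _ _
  · intro α hα
    rw [Finset.mem_filter] at hα
    rw [← hα.2]
    exact Fin.snoc_init_self α
  · intro α _
    exact Fin.init_snoc ..
  · intro α hα
    rw [Finset.mem_filter] at hα
    conv_lhs => rw [← Fin.snoc_init_self α]
    rw [hα.2]

end Sums

section Main

def Fh (h : E3 → ℂ) (k : ℕ) : E3 → ℂ := pd1C^[k] h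

def GΦ (Φ : E3 → ℝ) (k : ℕ) : E3 → ℂ := fun y => ((pd1R^[k + 2] Φ y : ℝ) : ℂ)

def dCΦ (Φ : E3 → ℝ) : E3 → ℂ := fun y => ((pd1R Φ y : ℝ) : ℂ)

def Tm (Φ : E3 → ℝ) (h : E3 → ℂ) (m r : ℕ) (α : Fin (r + 1) → ℕ) : E3 → ℂ :=
  fun y => Fh h (α 0) y * (∏ q : Fin r, GΦ Φ (α q.succ) y) / dCΦ Φ y ^ (r + m)

variable {U : Set E3} {Φ : E3 → ℝ} {h : E3 → ℂ} {x : E3}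

lemma pd1C_prod {ι : Type*} [DecidableEq ι] {s : Finset ι} {g : ι → E3 → ℂ}
    (hg : ∀ i ∈ s, DifferentiableAt ℝ (g i) x) :
    pd1C (fun y => ∏ i ∈ s, g i y) x
      = ∑ i ∈ s, (∏ j ∈ s.erase i, g j x) * pd1C (g i) x := by
  unfold pd1C
  rw [fderiv_finset_prod hg]
  simp

lemma diff_prod {ι : Type*} [DecidableEq ι] {s : Finset ι} {g : ι → E3 → ℂ}
    (hg : ∀ i ∈ s, DifferentiableAt ℝ (g i) x) :
    DifferentiableAt ℝ (fun y => ∏ i ∈ s, g i y) x :=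
  (HasFDerivAt.finset_prod (fun i hi => (hg i hi).hasFDerivAt)).differentiableAt

lemma contDiffOn_finprod {ι : Type*} [DecidableEq ι] {s : Finset ι} {g : ι → E3 → ℂ}
    {U : Set E3} (hg : ∀ i ∈ s, ContDiffOn ℝ (⊤:ℕ∞) (g i) U) :
    ContDiffOn ℝ (⊤:ℕ∞) (fun y => ∏ i ∈ s, g i y) U := by
  induction s using Finset.induction with
  | empty => simpa using contDiffOn_const
  | @insert a s hnot ih =>
      simp only [Finset.prod_insert hnot]
      exact (hg _ (Finset.mem_insert_self a s)).mul
        (ih fun i hi => hg i (Finset.mem_insert_of_mem hi))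

lemma GΦ_contDiffOn (hU : IsOpen U) (hΦ : ContDiffOn ℝ (⊤:ℕ∞) Φ U) (k : ℕ) :
    ContDiffOn ℝ (⊤:ℕ∞) (GΦ Φ k) U :=
  Complex.ofRealCLM.contDiff.comp_contDiffOn (pd1R_iter_contDiffOn hU hΦ (k + 2))

lemma dCΦ_contDiffOn (hU : IsOpen U) (hΦ : ContDiffOn ℝ (⊤:ℕ∞) Φ U) :
    ContDiffOn ℝ (⊤:ℕ∞) (dCΦ Φ) U :=
  Complex.ofRealCLM.contDiff.comp_contDiffOn (pd1R_contDiffOn hU hΦ)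

lemma Tm_contDiffOn (hU : IsOpen U) (hΦ : ContDiffOn ℝ (⊤:ℕ∞) Φ U)
    (hd : ∀ x ∈ U, pd1R Φ x ≠ 0) (hh : ContDiffOn ℝ (⊤:ℕ∞) h U)
    (m r : ℕ) (α : Fin (r + 1) → ℕ) : ContDiffOn ℝ (⊤:ℕ∞) (Tm Φ h m r α) U := by
  classical
  have h1 : ContDiffOn ℝ (⊤:ℕ∞) (fun y => Fh h (α 0) y * ∏ q : Fin r, GΦ Φ (α q.succ) y) U :=
    (pd1C_iter_contDiffOn hU hh (α 0)).mul
      (contDiffOn_finprod fun (q : Fin r) _ => GΦ_contDiffOn hU hΦ (α q.succ))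
  have h2 : ContDiffOn ℝ (⊤:ℕ∞) (fun y => dCΦ Φ y ^ (r + m)) U :=
    (dCΦ_contDiffOn hU hΦ).pow _
  have h3 : ∀ y ∈ U, dCΦ Φ y ^ (r + m) ≠ 0 :=
    fun y hy => pow_ne_zero _ (by simpa [dCΦ, Complex.ofReal_eq_zero] using hd y hy)
  have heq : Tm Φ h m r α
      = fun y => (Fh h (α 0) y * ∏ q : Fin r, GΦ Φ (α q.succ) y) * (dCΦ Φ y ^ (r + m))⁻¹ := by
    funext y
    rw [Tm, div_eq_mul_inv]
  rw [heq]
  exact h1.mul (h2.inv h3)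

lemma Tm_step (hU : IsOpen U) (hΦ : ContDiffOn ℝ (⊤:ℕ∞) Φ U)
    (hd : ∀ x ∈ U, pd1R Φ x ≠ 0) (hh : ContDiffOn ℝ (⊤:ℕ∞) h U)
    (m r : ℕ) (α : Fin (r + 1) → ℕ) (hx : x ∈ U) :
    Dadj Φ (Tm Φ h m r α) x
      = -(Tm Φ h (m + 1) r (Function.update α 0 (α 0 + 1)) x)
        - (∑ q : Fin r, Tm Φ h (m + 1) r (Function.update α q.succ (α q.succ + 1)) x)
        + ((r + m + 1 : ℕ) : ℂ) * Tm Φ h (m + 1) (r + 1) (Fin.snoc α 0) x := by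
  classical
  have hdx : dCΦ Φ x ≠ 0 := by simpa [dCΦ, Complex.ofReal_eq_zero] using hd x hx
  have hF : ∀ k, DifferentiableAt ℝ (Fh h k) x :=
    fun k => diffAtC hU (pd1C_iter_contDiffOn hU hh k) hx
  have hG : ∀ k, DifferentiableAt ℝ (GΦ Φ k) x :=
    fun k => diffAtC hU (GΦ_contDiffOn hU hΦ k) hx
  have hdC : DifferentiableAt ℝ (dCΦ Φ) x := diffAtC hU (dCΦ_contDiffOn hU hΦ) hx
  have hP : DifferentiableAt ℝ (fun y => ∏ q : Fin r, GΦ Φ (α q.succ) y) x :=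
    diff_prod fun q _ => hG _
  have vF : ∀ k, pd1C (Fh h k) x = Fh h (k + 1) x := by
    intro k
    rw [Fh, Fh, Function.iterate_succ_apply']
  have vG : ∀ k, pd1C (GΦ Φ k) x = GΦ Φ (k + 1) x := by
    intro k
    have hit : pd1R^[k + 1 + 2] Φ = pd1R (pd1R^[k + 2] Φ) := by
      rw [show k + 1 + 2 = (k + 2) + 1 from rfl, Function.iterate_succ_apply']
    show pd1C (fun y => ((pd1R^[k + 2] Φ y : ℝ) : ℂ)) x = ((pd1R^[k + 1 + 2] Φ x : ℝ) : ℂ)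
    rw [pd1C_ofReal (diffAtR hU (pd1R_iter_contDiffOn hU hΦ (k + 2)) hx), hit]
  have vd : pd1C (dCΦ Φ) x = GΦ Φ 0 x := by
    have hit : pd1R^[0 + 2] Φ = pd1R (pd1R Φ) := by
      rw [show 0 + 2 = 1 + 1 from rfl, Function.iterate_succ_apply', Function.iterate_one]
    show pd1C (fun y => ((pd1R Φ y : ℝ) : ℂ)) x = ((pd1R^[0 + 2] Φ x : ℝ) : ℂ)
    rw [pd1C_ofReal (diffAtR hU (pd1R_contDiffOn hU hΦ) hx), hit]
  have e0 : (fun y => Tm Φ h m r α y / ((pd1R Φ y : ℝ) : ℂ))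
      = fun y => (Fh h (α 0) y * ∏ q : Fin r, GΦ Φ (α q.succ) y) / dCΦ Φ y ^ (r + m + 1) := by
    funext y
    simp only [Tm, dCΦ]
    rw [div_div, ← pow_succ]
  have pA : (∏ q : Fin r, GΦ Φ ((Function.update α 0 (α 0 + 1)) q.succ) x)
      = ∏ q : Fin r, GΦ Φ (α q.succ) x := by
    refine Finset.prod_congr rfl fun q _ => ?_
    rw [Function.update_of_ne (Fin.succ_ne_zero q)]
  have pB : ∀ q : Fin r,
      (∏ p : Fin r, GΦ Φ ((Function.update α q.succ (α q.succ + 1)) p.succ) x)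
        = GΦ Φ (α q.succ + 1) x * ∏ p ∈ Finset.univ.erase q, GΦ Φ (α p.succ) x := by
    intro q
    rw [← Finset.mul_prod_erase Finset.univ _ (Finset.mem_univ q), Function.update_self]
    congr 1
    refine Finset.prod_congr rfl fun p hp => ?_
    rw [Function.update_of_ne]
    exact fun hpq => Finset.ne_of_mem_erase hp (Fin.succ_injective _ hpq)
  have pC : (∏ q : Fin (r + 1), GΦ Φ ((Fin.snoc α 0 : Fin (r + 2) → ℕ) q.succ) x)
      = (∏ q : Fin r, GΦ Φ (α q.succ) x) * GΦ Φ 0 x := by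
    rw [Fin.prod_univ_castSucc]
    congr 1
    · refine Finset.prod_congr rfl fun p _ => ?_
      congr 1
      rw [Fin.succ_castSucc, Fin.snoc_castSucc]
    · rw [Fin.succ_last, Fin.snoc_last]
  -- main computation
  rw [show Dadj Φ (Tm Φ h m r α) x
      = -(pd1C (fun y => Tm Φ h m r α y / ((pd1R Φ y : ℝ) : ℂ)) x) from rfl, e0]
  rw [pd1C_div_pow ((hF _).fun_mul hP) hdC hdx, pd1C_mul (hF _) hP, pd1C_prod fun q _ => hG _]
  simp only [vF, vG, vd]
  -- unfold the Tm's on the RHS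
  simp only [Tm, Function.update_self, Function.update_of_ne (Fin.succ_ne_zero _), pA, pC]
  have hsum : (∑ q : Fin r, (Fh h (Function.update α q.succ (α q.succ + 1) 0) x *
          ∏ p : Fin r, GΦ Φ (Function.update α q.succ (α q.succ + 1) p.succ) x)
            / dCΦ Φ x ^ (r + (m + 1)))
      = (∑ q : Fin r, (∏ p ∈ Finset.univ.erase q, GΦ Φ (α p.succ) x) * GΦ Φ (α q.succ + 1) x)
        * (Fh h (α 0) x / dCΦ Φ x ^ (r + (m + 1))) := by
    rw [Finset.sum_mul]
    refine Finset.sum_congr rfl fun q _ => ?_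
    rw [Function.update_of_ne (Fin.succ_ne_zero q).symm, pB q]
    ring
  have hsn : (Fin.snoc α 0 : Fin (r + 2) → ℕ) 0 = α 0 := by
    have h0 : (0 : Fin (r + 2)) = Fin.castSucc (0 : Fin (r + 1)) := by simp
    rw [h0, Fin.snoc_castSucc]
  rw [hsum, hsn]
  ring


lemma regroup (N : ℕ) (tm : (r : ℕ) → (Fin (r + 1) → ℕ) → ℂ) :
    ∑ r ∈ Finset.range (N + 2), ∑ α ∈ Finset.Nat.antidiagonalTuple (r + 1) (N + 1 - r),
        ((Ωc (N + 1) r α : ℝ) : ℂ) * tm r α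
      = ∑ r ∈ Finset.range (N + 1), ∑ α ∈ Finset.Nat.antidiagonalTuple (r + 1) (N - r),
          ((Ωc N r α : ℝ) : ℂ) *
            (-(tm r (Function.update α 0 (α 0 + 1)))
              - (∑ q : Fin r, tm r (Function.update α q.succ (α q.succ + 1)))
              + ((r + N + 1 : ℕ) : ℂ) * tm (r + 1) (Fin.snoc α 0)) := by
  classical
  simp only [Ωc, Complex.ofReal_add, add_mul]
  simp only [Finset.sum_add_distrib]
  have hSA : (∑ r ∈ Finset.range (N + 2), ∑ α ∈ Finset.Nat.antidiagonalTuple (r + 1) (N + 1 - r),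
        ((if 1 ≤ α 0 then -Ωc N r (Function.update α 0 (α 0 - 1)) else 0 : ℝ) : ℂ) * tm r α)
      = ∑ r ∈ Finset.range (N + 1), ∑ α ∈ Finset.Nat.antidiagonalTuple (r + 1) (N - r),
          -(((Ωc N r α : ℝ) : ℂ) * tm r (Function.update α 0 (α 0 + 1))) := by
    rw [Finset.sum_range_succ]
    have hz : (∑ α ∈ Finset.Nat.antidiagonalTuple (N + 1 + 1) (N + 1 - (N + 1)),
        ((if 1 ≤ α 0 then -Ωc N (N + 1) (Function.update α 0 (α 0 - 1)) else 0 : ℝ) : ℂ)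
          * tm (N + 1) α) = 0 := by
      rw [Nat.sub_self, Finset.Nat.antidiagonalTuple_zero_right, Finset.sum_singleton]
      simp
    rw [hz, add_zero]
    refine Finset.sum_congr rfl fun r hr => ?_
    rw [Finset.mem_range] at hr
    have hnr : N + 1 - r = (N - r) + 1 := by omega
    rw [hnr]
    rw [Finset.sum_congr rfl (fun α (hα : α ∈ Finset.Nat.antidiagonalTuple (r + 1) ((N - r) + 1)) =>
      show ((if 1 ≤ α 0 then -Ωc N r (Function.update α 0 (α 0 - 1)) else 0 : ℝ) : ℂ) * tm r α
        = if 1 ≤ α 0 then (fun β => -(((Ωc N r β : ℝ) : ℂ)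
            * tm r (Function.update β 0 (β 0 + 1)))) (Function.update α 0 (α 0 - 1)) else 0 by
        split_ifs with hg
        · dsimp only
          rw [update_dec_inc α 0 hg]
          push_cast
          ring
        · simp)]
    rw [sum_dec 0 (fun β => -(((Ωc N r β : ℝ) : ℂ) * tm r (Function.update β 0 (β 0 + 1))))]
  have hSB : (∑ r ∈ Finset.range (N + 2), ∑ α ∈ Finset.Nat.antidiagonalTuple (r + 1) (N + 1 - r),
        ((∑ q : Fin r, if 1 ≤ α q.succ then
            -Ωc N r (Function.update α q.succ (α q.succ - 1)) else 0 : ℝ) : ℂ) * tm r α)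
      = ∑ r ∈ Finset.range (N + 1), ∑ α ∈ Finset.Nat.antidiagonalTuple (r + 1) (N - r),
          ∑ q : Fin r,
            -(((Ωc N r α : ℝ) : ℂ) * tm r (Function.update α q.succ (α q.succ + 1))) := by
    rw [Finset.sum_range_succ]
    have hz : (∑ α ∈ Finset.Nat.antidiagonalTuple (N + 1 + 1) (N + 1 - (N + 1)),
        ((∑ q : Fin (N + 1), if 1 ≤ α q.succ then
            -Ωc N (N + 1) (Function.update α q.succ (α q.succ - 1)) else 0 : ℝ) : ℂ)
          * tm (N + 1) α) = 0 := by
      rw [Nat.sub_self, Finset.Nat.antidiagonalTuple_zero_right, Finset.sum_singleton]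
      simp
    rw [hz, add_zero]
    refine Finset.sum_congr rfl fun r hr => ?_
    rw [Finset.mem_range] at hr
    have hnr : N + 1 - r = (N - r) + 1 := by omega
    rw [hnr]
    have e1 : ∀ α ∈ Finset.Nat.antidiagonalTuple (r + 1) ((N - r) + 1),
        ((∑ q : Fin r, if 1 ≤ α q.succ then
            -Ωc N r (Function.update α q.succ (α q.succ - 1)) else 0 : ℝ) : ℂ) * tm r α
          = ∑ q : Fin r, (if 1 ≤ α q.succ then (fun β => -(((Ωc N r β : ℝ) : ℂ)
              * tm r (Function.update β q.succ (β q.succ + 1))))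
                (Function.update α q.succ (α q.succ - 1)) else 0) := by
      intro α hα
      push_cast
      rw [Finset.sum_mul]
      refine Finset.sum_congr rfl fun q _ => ?_
      split_ifs with hg
      · try dsimp only
        rw [update_dec_inc α q.succ hg]
        push_cast
        ring
      · simp
    rw [Finset.sum_congr rfl e1, Finset.sum_comm]
    rw [Finset.sum_congr rfl (fun q (_ : q ∈ (Finset.univ : Finset (Fin r))) =>
      sum_dec q.succ (fun β => -(((Ωc N r β : ℝ) : ℂ)
        * tm r (Function.update β q.succ (β q.succ + 1)))))]
    rw [Finset.sum_comm]
  have hSC : (∑ r ∈ Finset.range (N + 2), ∑ α ∈ Finset.Nat.antidiagonalTuple (r + 1) (N + 1 - r),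
        ((Cpart (Ωc N) N r α : ℝ) : ℂ) * tm r α)
      = ∑ r ∈ Finset.range (N + 1), ∑ α ∈ Finset.Nat.antidiagonalTuple (r + 1) (N - r),
          ((r + 1 + N : ℕ) : ℂ) * ((Ωc N r α : ℝ) : ℂ) * tm (r + 1) (Fin.snoc α 0) := by
    rw [Finset.sum_range_succ']
    have hz : (∑ α ∈ Finset.Nat.antidiagonalTuple (0 + 1) (N + 1 - 0),
        ((Cpart (Ωc N) N 0 α : ℝ) : ℂ) * tm 0 α) = 0 := by
      apply Finset.sum_eq_zero
      intro α _
      show ((Cpart (Ωc N) N 0 α : ℝ) : ℂ) * tm 0 α = 0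
      simp [Cpart]
    rw [hz, add_zero]
    refine Finset.sum_congr rfl fun r hr => ?_
    rw [Finset.mem_range] at hr
    have hnr : N + 1 - (r + 1) = N - r := by omega
    rw [hnr]
    have e1 : ∀ α ∈ Finset.Nat.antidiagonalTuple (r + 1 + 1) (N - r),
        ((Cpart (Ωc N) N (r + 1) α : ℝ) : ℂ) * tm (r + 1) α
          = if α (Fin.last (r + 1)) = 0 then (((r + 1 + N : ℕ) : ℂ)
              * ((Ωc N r (Fin.init α) : ℝ) : ℂ) * tm (r + 1) α) else 0 := by
      intro α hα
      simp only [Cpart]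
      split_ifs with hg
      · push_cast
        ring
      · simp
    rw [Finset.sum_congr rfl e1,
      sum_snoc (fun α => ((r + 1 + N : ℕ) : ℂ) * ((Ωc N r (Fin.init α) : ℝ) : ℂ)
        * tm (r + 1) α)]
    refine Finset.sum_congr rfl fun α _ => ?_
    rw [Fin.init_snoc]
  rw [hSA, hSB, hSC]
  rw [← Finset.sum_add_distrib, ← Finset.sum_add_distrib]
  refine Finset.sum_congr rfl fun r _ => ?_
  rw [← Finset.sum_add_distrib, ← Finset.sum_add_distrib]
  refine Finset.sum_congr rfl fun α _ => ?_
  rw [Finset.sum_neg_distrib, ← Finset.mul_sum]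
  push_cast
  ring


lemma main_expand {U : Set E3} {Φ : E3 → ℝ} {h : E3 → ℂ}
    (hU : IsOpen U) (hΦ : ContDiffOn ℝ (⊤:ℕ∞) Φ U) (hd : ∀ x ∈ U, pd1R Φ x ≠ 0)
    (hh : ContDiffOn ℝ (⊤:ℕ∞) h U) :
    ∀ N, ∀ x ∈ U, (Dadj Φ)^[N] h x
      = ∑ r ∈ Finset.range (N + 1), ∑ α ∈ Finset.Nat.antidiagonalTuple (r + 1) (N - r),
          ((Ωc N r α : ℝ) : ℂ) * Tm Φ h N r α x := by
  intro N
  induction N with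
  | zero =>
      intro x hx
      rw [Finset.sum_range_one, Finset.Nat.antidiagonalTuple_zero_right, Finset.sum_singleton]
      simp [Ωc, Tm, Fh]
  | succ N ih =>
      intro x hx
      rw [Function.iterate_succ_apply']
      have hdx : dCΦ Φ x ≠ 0 := by simpa [dCΦ, Complex.ofReal_eq_zero] using hd x hx
      have hTd : ∀ (r : ℕ) (α : Fin (r + 1) → ℕ),
          DifferentiableAt ℝ (fun y => Tm Φ h N r α y / dCΦ Φ y) x := by
        intro r α
        have h1 := diffAtC hU (Tm_contDiffOn hU hΦ hd hh N r α) hx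
        have h2 := diffAtC hU (dCΦ_contDiffOn hU hΦ) hx
        have heq : (fun y => Tm Φ h N r α y / dCΦ Φ y)
            = fun y => Tm Φ h N r α y * (dCΦ Φ y)⁻¹ := funext fun y => div_eq_mul_inv _ _
        rw [heq]
        exact h1.mul (h2.inv hdx)
      have step1 : Dadj Φ ((Dadj Φ)^[N] h) x
          = -(pd1C (fun y => ∑ r ∈ Finset.range (N + 1),
              ∑ α ∈ Finset.Nat.antidiagonalTuple (r + 1) (N - r),
                ((Ωc N r α : ℝ) : ℂ) * (Tm Φ h N r α y / dCΦ Φ y)) x) := by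
        show -(pd1C (fun y => (Dadj Φ)^[N] h y / ((pd1R Φ y : ℝ) : ℂ)) x) = _
        congr 1
        apply pd1C_congr hU hx
        intro y hy
        rw [ih y hy, Finset.sum_div]
        refine Finset.sum_congr rfl fun r _ => ?_
        rw [Finset.sum_div]
        exact Finset.sum_congr rfl fun α _ => mul_div_assoc _ _ _
      have hDT : ∀ (r : ℕ) (α : Fin (r + 1) → ℕ),
          pd1C (fun y => Tm Φ h N r α y / dCΦ Φ y) x = -(Dadj Φ (Tm Φ h N r α) x) := by
        intro r α
        show _ = -(-(pd1C (fun y => Tm Φ h N r α y / ((pd1R Φ y : ℝ) : ℂ)) x))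
        rw [neg_neg]
        rfl
      rw [step1,
        pd1C_sum (fun r _ => DifferentiableAt.fun_sum fun α _ => (hTd r α).const_mul _)]
      have step2 : ∀ r ∈ Finset.range (N + 1),
          pd1C (fun y => ∑ α ∈ Finset.Nat.antidiagonalTuple (r + 1) (N - r),
              ((Ωc N r α : ℝ) : ℂ) * (Tm Φ h N r α y / dCΦ Φ y)) x
            = ∑ α ∈ Finset.Nat.antidiagonalTuple (r + 1) (N - r),
                ((Ωc N r α : ℝ) : ℂ) * -(Dadj Φ (Tm Φ h N r α) x) := by
        intro r _
        rw [pd1C_sum (fun α _ => (hTd r α).const_mul _)]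
        refine Finset.sum_congr rfl fun α _ => ?_
        rw [pd1C_const_mul _ (hTd r α), hDT r α]
      rw [Finset.sum_congr rfl step2]
      simp only [mul_neg, Finset.sum_neg_distrib, neg_neg]
      have step3 : ∀ r ∈ Finset.range (N + 1),
          (∑ α ∈ Finset.Nat.antidiagonalTuple (r + 1) (N - r),
            ((Ωc N r α : ℝ) : ℂ) * Dadj Φ (Tm Φ h N r α) x)
          = ∑ α ∈ Finset.Nat.antidiagonalTuple (r + 1) (N - r),
              ((Ωc N r α : ℝ) : ℂ) *
                (-(Tm Φ h (N + 1) r (Function.update α 0 (α 0 + 1)) x)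
                  - (∑ q : Fin r, Tm Φ h (N + 1) r
                      (Function.update α q.succ (α q.succ + 1)) x)
                  + ((r + N + 1 : ℕ) : ℂ) * Tm Φ h (N + 1) (r + 1) (Fin.snoc α 0) x) := by
        intro r _
        refine Finset.sum_congr rfl fun α _ => ?_
        rw [Tm_step hU hΦ hd hh N r α hx]
      rw [Finset.sum_congr rfl step3, ← regroup N (fun r α => Tm Φ h (N + 1) r α x)]

/-- Explicit expansion of `(D′)^N h` with controlled coefficients. -/
theorem statement1 (N : ℕ) (hN : 1 ≤ N) :
    ∃ Ω : (r : ℕ) → (Fin (r + 1) → ℕ) → ℝ,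
      (∀ r α, |Ω r α| ≤ 3 ^ N * (Nat.factorial (N + 1) : ℝ)) ∧
      ∀ (U : Set E3) (Φ : E3 → ℝ) (h : E3 → ℂ),
        IsOpen U → ContDiffOn ℝ (⊤ : ℕ∞) Φ U → (∀ x ∈ U, pd1R Φ x ≠ 0) →
        ContDiffOn ℝ (⊤ : ℕ∞) h U →
        ∀ x ∈ U,
          (Dadj Φ)^[N] h x =
            ∑ r ∈ Finset.range (N + 1),
              ∑ α ∈ Finset.Nat.antidiagonalTuple (r + 1) (N - r),
                (Ω r α : ℂ) * (pd1C^[α 0] h x) *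
                  (∏ q : Fin r, ((pd1R^[α q.succ + 2] Φ x : ℝ) : ℂ)) /
                  ((pd1R Φ x : ℝ) : ℂ) ^ (r + N) := by
  refine ⟨Ωc N, fun r α => Ωc_bound N r α, ?_⟩
  intro U Φ h hU hΦ hd hh x hx
  rw [main_expand hU hΦ hd hh N x hx]
  refine Finset.sum_congr rfl fun r _ => Finset.sum_congr rfl fun α _ => ?_
  show ((Ωc N r α : ℝ) : ℂ) * (Fh h (α 0) x * (∏ q : Fin r, GΦ Φ (α q.succ) x)
      / dCΦ Φ x ^ (r + N)) = _
  rw [← mul_div_assoc, ← mul_assoc]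
  rfl

end Main
end
end

section
/- Let F, G : (0,∞) → [0,∞] be measurable and let ξ ∈ ℝ³ with ξ ≠ 0. Then ∫_{ℝ³} F(|ξ−ζ|) G(|ζ|) dζ = (2π/|ξ|) ∫₀^∞ ∫₀^∞ ρ τ F(ρ) G(τ) · 𝟙{|ρ−τ| ≤ |ξ| ≤ ρ+τ} dρ dτ, where 𝟙 denotes the indicator of the set of pairs (ρ,τ) with |ρ−τ| ≤ |ξ| ≤ ρ+τ. -/
open MeasureTheory Set
open scoped ENNReal

noncomputable section

namespace RadialAux

open Real

lemma lintegral_image_eq_deriv {s : Set ℝ} {f f' : ℝ → ℝ} (hs : MeasurableSet s)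
    (hf' : ∀ x ∈ s, HasDerivWithinAt f (f' x) s x) (hf : InjOn f s) (g : ℝ → ℝ≥0∞) :
    ∫⁻ x in f '' s, g x = ∫⁻ x in s, ENNReal.ofReal |f' x| * g (f x) := by
  simpa only [ContinuousLinearMap.det_toSpanSingleton] using
    lintegral_image_eq_lintegral_abs_det_fderiv_mul volume hs
      (fun x hx => (hf' x hx).hasFDerivWithinAt) hf g

lemma lintegral_comp_polarCoord_symm (f : ℝ × ℝ → ℝ≥0∞) :
    ∫⁻ p in polarCoord.target, ENNReal.ofReal p.1 * f (polarCoord.symm p) = ∫⁻ p, f p := by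
  set B : ℝ × ℝ → ℝ × ℝ →L[ℝ] ℝ × ℝ := fun p =>
    LinearMap.toContinuousLinearMap (Matrix.toLin (Module.Basis.finTwoProd ℝ) (Module.Basis.finTwoProd ℝ)
      !![Real.cos p.2, -p.1 * Real.sin p.2; Real.sin p.2, p.1 * Real.cos p.2])
  have B_det : ∀ p, (B p).det = p.1 := by
    intro p
    conv_rhs => rw [← one_mul p.1, ← Real.cos_sq_add_sin_sq p.2]
    simp only [B, neg_mul, LinearMap.det_toContinuousLinearMap, LinearMap.det_toLin,
      Matrix.det_fin_two_of, sub_neg_eq_add]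
    ring
  symm
  calc
    ∫⁻ p, f p = ∫⁻ p in polarCoord.source, f p := by
      rw [← setLIntegral_univ]
      exact (setLIntegral_congr polarCoord_source_ae_eq_univ.symm)
    _ = ∫⁻ p in polarCoord.symm '' polarCoord.target, f p := by
      rw [polarCoord.symm_image_target_eq_source]
    _ = ∫⁻ p in polarCoord.target, ENNReal.ofReal |(B p).det| * f (polarCoord.symm p) :=
      lintegral_image_eq_lintegral_abs_det_fderiv_mul volume
        polarCoord.open_target.measurableSet
        (fun p _ => (hasFDerivAt_polarCoord_symm p).hasFDerivWithinAt)
        polarCoord.symm.injOn f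
    _ = _ := by
      apply setLIntegral_congr_fun polarCoord.open_target.measurableSet
      refine fun p hp => ?_
      beta_reduce
      rw [B_det, abs_of_pos hp.1]


lemma lintegral_rtwo (h : ℝ → ℝ≥0∞) (hh : Measurable h) :
    ∫⁻ y : ℝ × ℝ, h (Real.sqrt (y.1 ^ 2 + y.2 ^ 2)) =
      ENNReal.ofReal (2 * Real.pi) * ∫⁻ r in Ioi (0:ℝ), ENNReal.ofReal r * h r := by
  rw [← lintegral_comp_polarCoord_symm fun y => h (Real.sqrt (y.1 ^ 2 + y.2 ^ 2))]
  have htarget : polarCoord.target = Ioi (0:ℝ) ×ˢ Ioo (-Real.pi) Real.pi := rfl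
  have h1 : ∫⁻ p in polarCoord.target,
      ENNReal.ofReal p.1 * h (Real.sqrt ((polarCoord.symm p).1 ^ 2 + (polarCoord.symm p).2 ^ 2)) =
      ∫⁻ p in polarCoord.target, (fun r => ENNReal.ofReal r * h r) p.1 * (fun _ => 1) p.2 := by
    apply setLIntegral_congr_fun polarCoord.open_target.measurableSet
    refine fun p hp => ?_
    have hp1 : (0:ℝ) < p.1 := hp.1
    have h2 : (polarCoord.symm p).1 ^ 2 + (polarCoord.symm p).2 ^ 2 = p.1 ^ 2 := by
      simp only [polarCoord_symm_apply]
      rw [mul_pow, mul_pow, ← mul_add, Real.cos_sq_add_sin_sq, mul_one]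
    simp only [h2, Real.sqrt_sq hp1.le, mul_one]
  rw [h1, htarget, Measure.volume_eq_prod, ← Measure.prod_restrict]
  rw [lintegral_prod_mul (f := fun r => ENNReal.ofReal r * h r) (g := fun _ => (1:ℝ≥0∞))
    (by fun_prop) aemeasurable_const]
  simp only [lintegral_const, Measure.restrict_apply MeasurableSet.univ, univ_inter,
    Real.volume_Ioo, one_mul]
  have : Real.pi - -Real.pi = 2 * Real.pi := by ring
  rw [this, mul_comm]


lemma image_sqrt_sq_add (c : ℝ) :
    (fun r : ℝ => Real.sqrt (c ^ 2 + r ^ 2)) '' Ioi 0 = Ioi |c| := by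
  ext ρ
  simp only [mem_image, mem_Ioi]
  constructor
  · rintro ⟨r, hr, rfl⟩
    calc |c| = Real.sqrt (c ^ 2) := (Real.sqrt_sq_eq_abs c).symm
    _ < _ := Real.sqrt_lt_sqrt (sq_nonneg c) (by nlinarith)
  · intro hρ
    have hρ0 : 0 ≤ ρ := le_trans (abs_nonneg c) hρ.le
    have h2 : c ^ 2 < ρ ^ 2 := by nlinarith [abs_nonneg c, sq_abs c]
    refine ⟨Real.sqrt (ρ ^ 2 - c ^ 2), Real.sqrt_pos.mpr (by linarith), ?_⟩
    rw [Real.sq_sqrt (by linarith : (0:ℝ) ≤ ρ ^ 2 - c ^ 2),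
      show c ^ 2 + (ρ ^ 2 - c ^ 2) = ρ ^ 2 by ring, Real.sqrt_sq hρ0]

lemma hasDeriv_sqrt_sq_add (c : ℝ) {r : ℝ} (hr : 0 < r) :
    HasDerivAt (fun r : ℝ => Real.sqrt (c ^ 2 + r ^ 2))
      (r / Real.sqrt (c ^ 2 + r ^ 2)) r := by
  have hne : c ^ 2 + r ^ 2 ≠ 0 := by positivity
  have h1 : HasDerivAt (fun r : ℝ => c ^ 2 + r ^ 2) (2 * r) r := by
    simpa using (hasDerivAt_pow 2 r).const_add (c ^ 2)
  have h2 := (Real.hasDerivAt_sqrt hne).comp r h1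
  refine h2.congr_deriv ?_
  have hs : Real.sqrt (c ^ 2 + r ^ 2) ≠ 0 := by positivity
  field_simp

lemma injOn_sqrt_sq_add (c : ℝ) :
    InjOn (fun r : ℝ => Real.sqrt (c ^ 2 + r ^ 2)) (Ioi 0) := by
  intro r1 h1 r2 h2 heq
  simp only at heq
  have := congrArg (fun t : ℝ => t ^ 2) heq
  simp only [Real.sq_sqrt (by positivity : (0:ℝ) ≤ c ^ 2 + r1 ^ 2),
    Real.sq_sqrt (by positivity : (0:ℝ) ≤ c ^ 2 + r2 ^ 2)] at this
  have h1' : (0:ℝ) < r1 := h1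
  have h2' : (0:ℝ) < r2 := h2
  nlinarith

lemma sub_rho (F G : ℝ → ℝ≥0∞) (c z : ℝ) :
    ∫⁻ r in Ioi (0:ℝ),
        ENNReal.ofReal r * (F (Real.sqrt (c ^ 2 + r ^ 2)) * G (Real.sqrt (z ^ 2 + r ^ 2))) =
      ∫⁻ ρ in Ioi |c|,
        ENNReal.ofReal ρ * (F ρ * G (Real.sqrt (ρ ^ 2 - c ^ 2 + z ^ 2))) := by
  rw [← image_sqrt_sq_add c,
    lintegral_image_eq_deriv measurableSet_Ioi
      (fun r hr => (hasDeriv_sqrt_sq_add c hr).hasDerivWithinAt)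
      (injOn_sqrt_sq_add c)
      (fun ρ => ENNReal.ofReal ρ * (F ρ * G (Real.sqrt (ρ ^ 2 - c ^ 2 + z ^ 2))))]
  apply setLIntegral_congr_fun measurableSet_Ioi
  refine fun r hr => ?_
  beta_reduce
  have hr' : (0:ℝ) < r := hr
  have hpos : (0:ℝ) < c ^ 2 + r ^ 2 := by positivity
  have hs : (0:ℝ) < Real.sqrt (c ^ 2 + r ^ 2) := Real.sqrt_pos.mpr hpos
  have habs : |r / Real.sqrt (c ^ 2 + r ^ 2)| = r / Real.sqrt (c ^ 2 + r ^ 2) :=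
    abs_of_nonneg (by positivity)
  have hsq : Real.sqrt (c ^ 2 + r ^ 2) ^ 2 - c ^ 2 + z ^ 2 = z ^ 2 + r ^ 2 := by
    rw [Real.sq_sqrt hpos.le]; ring
  rw [habs, hsq,
    ← mul_assoc (ENNReal.ofReal (r / Real.sqrt (c ^ 2 + r ^ 2)))
      (ENNReal.ofReal (Real.sqrt (c ^ 2 + r ^ 2))),
    ← ENNReal.ofReal_mul (by positivity), div_mul_cancel₀ _ hs.ne']


variable {a ρ : ℝ}

lemma u_pos (ha : 0 < a) (hρ : 0 < ρ) {z : ℝ} (hz : z ∈ Ioo (a - ρ) (a + ρ)) :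
    (ρ - a) ^ 2 < ρ ^ 2 - a ^ 2 + 2 * a * z ∧ ρ ^ 2 - a ^ 2 + 2 * a * z < (ρ + a) ^ 2 := by
  obtain ⟨h1, h2⟩ := hz
  constructor <;> nlinarith

lemma image_u (ha : 0 < a) (hρ : 0 < ρ) :
    (fun z : ℝ => Real.sqrt (ρ ^ 2 - a ^ 2 + 2 * a * z)) '' Ioo (a - ρ) (a + ρ) =
      Ioo |ρ - a| (ρ + a) := by
  ext τ
  simp only [mem_image, mem_Ioo]
  constructor
  · rintro ⟨z, hz, rfl⟩
    obtain ⟨hlt, hgt⟩ := u_pos ha hρ hz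
    constructor
    · calc |ρ - a| = Real.sqrt ((ρ - a) ^ 2) := (Real.sqrt_sq_eq_abs _).symm
      _ < _ := Real.sqrt_lt_sqrt (sq_nonneg _) hlt
    · calc Real.sqrt (ρ ^ 2 - a ^ 2 + 2 * a * z) < Real.sqrt ((ρ + a) ^ 2) :=
          Real.sqrt_lt_sqrt (by nlinarith [sq_nonneg (ρ - a)]) hgt
      _ = ρ + a := Real.sqrt_sq (by positivity)
  · rintro ⟨h1, h2⟩
    have hτ0 : 0 ≤ τ := le_trans (abs_nonneg _) h1.le
    have hsq1 : (ρ - a) ^ 2 < τ ^ 2 := by nlinarith [abs_nonneg (ρ - a), sq_abs (ρ - a)]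
    have hsq2 : τ ^ 2 < (ρ + a) ^ 2 := by nlinarith
    refine ⟨(τ ^ 2 - ρ ^ 2 + a ^ 2) / (2 * a), ⟨?_, ?_⟩, ?_⟩
    · rw [lt_div_iff₀ (by positivity)]; nlinarith
    · rw [div_lt_iff₀ (by positivity)]; nlinarith
    · rw [show ρ ^ 2 - a ^ 2 + 2 * a * ((τ ^ 2 - ρ ^ 2 + a ^ 2) / (2 * a)) = τ ^ 2 by
        field_simp; ring]
      exact Real.sqrt_sq hτ0

lemma hasDeriv_u (ha : 0 < a) (hρ : 0 < ρ) {z : ℝ} (hz : z ∈ Ioo (a - ρ) (a + ρ)) :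
    HasDerivAt (fun z : ℝ => Real.sqrt (ρ ^ 2 - a ^ 2 + 2 * a * z))
      (a / Real.sqrt (ρ ^ 2 - a ^ 2 + 2 * a * z)) z := by
  have hpos : 0 < ρ ^ 2 - a ^ 2 + 2 * a * z :=
    lt_of_le_of_lt (sq_nonneg _) (u_pos ha hρ hz).1
  have h1 : HasDerivAt (fun z : ℝ => ρ ^ 2 - a ^ 2 + 2 * a * z) (2 * a) z := by
    simpa using ((hasDerivAt_id z).const_mul (2 * a)).const_add (ρ ^ 2 - a ^ 2)
  have h2 := (Real.hasDerivAt_sqrt hpos.ne').comp z h1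
  refine h2.congr_deriv ?_
  have hs : Real.sqrt (ρ ^ 2 - a ^ 2 + 2 * a * z) ≠ 0 := by positivity
  field_simp

lemma injOn_u (ha : 0 < a) (hρ : 0 < ρ) :
    InjOn (fun z : ℝ => Real.sqrt (ρ ^ 2 - a ^ 2 + 2 * a * z)) (Ioo (a - ρ) (a + ρ)) := by
  intro z1 h1 z2 h2 heq
  have p1 : 0 < ρ ^ 2 - a ^ 2 + 2 * a * z1 := lt_of_le_of_lt (sq_nonneg _) (u_pos ha hρ h1).1
  have p2 : 0 < ρ ^ 2 - a ^ 2 + 2 * a * z2 := lt_of_le_of_lt (sq_nonneg _) (u_pos ha hρ h2).1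
  simp only at heq
  have := congrArg (fun t : ℝ => t ^ 2) heq
  simp only [Real.sq_sqrt p1.le, Real.sq_sqrt p2.le] at this
  have : 2 * a * z1 = 2 * a * z2 := by linarith
  exact mul_left_cancel₀ (by positivity) this

lemma sub_tau (G : ℝ → ℝ≥0∞) (ha : 0 < a) (hρ : 0 < ρ) :
    ∫⁻ z in Ioo (a - ρ) (a + ρ), G (Real.sqrt (ρ ^ 2 - a ^ 2 + 2 * a * z)) =
      ∫⁻ τ in Ioo |ρ - a| (ρ + a), ENNReal.ofReal (τ / a) * G τ := by
  rw [← image_u ha hρ,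
    lintegral_image_eq_deriv measurableSet_Ioo
      (fun z hz => (hasDeriv_u ha hρ hz).hasDerivWithinAt) (injOn_u ha hρ)
      (fun τ => ENNReal.ofReal (τ / a) * G τ)]
  apply setLIntegral_congr_fun measurableSet_Ioo
  refine fun z hz => ?_
  beta_reduce
  have hpos : 0 < ρ ^ 2 - a ^ 2 + 2 * a * z :=
    lt_of_le_of_lt (sq_nonneg _) (u_pos ha hρ hz).1
  have hs : 0 < Real.sqrt (ρ ^ 2 - a ^ 2 + 2 * a * z) := Real.sqrt_pos.mpr hpos
  rw [abs_of_nonneg (by positivity : (0:ℝ) ≤ a / Real.sqrt (ρ ^ 2 - a ^ 2 + 2 * a * z)),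
    ← mul_assoc, ← ENNReal.ofReal_mul (by positivity),
    show a / Real.sqrt (ρ ^ 2 - a ^ 2 + 2 * a * z) *
        (Real.sqrt (ρ ^ 2 - a ^ 2 + 2 * a * z) / a) = 1 by
      rw [div_mul_div_comm, mul_comm a, div_self (mul_ne_zero hs.ne' ha.ne')],
    ENNReal.ofReal_one, one_mul]


lemma coords (F G : ℝ → ℝ≥0∞) (hF : Measurable F) (hG : Measurable G)
    (ξ : E3) (hξ : ξ ≠ 0) :
    ∫⁻ ζ, F ‖ξ - ζ‖ * G ‖ζ‖ =
      ∫⁻ q : ℝ × ℝ × ℝ,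
        F (Real.sqrt ((‖ξ‖ - q.1) ^ 2 + (q.2.1 ^ 2 + q.2.2 ^ 2))) *
          G (Real.sqrt (q.1 ^ 2 + (q.2.1 ^ 2 + q.2.2 ^ 2))) := by
  have ha : (0:ℝ) < ‖ξ‖ := norm_pos_iff.mpr hξ
  set a := ‖ξ‖ with ha_def
  -- orthonormal basis with b 0 = a⁻¹ • ξ
  have hcard : Module.finrank ℝ E3 = Fintype.card (Fin 3) := by
    simp [finrank_euclideanSpace_fin]
  have horth : Orthonormal ℝ (({0} : Set (Fin 3)).restrict fun _ : Fin 3 => a⁻¹ • ξ) := by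
    rw [orthonormal_iff_ite]
    intro i j
    have hij : i = j := Subsingleton.elim i j
    subst hij
    simp only [Set.restrict_apply, if_pos rfl, real_inner_smul_left, real_inner_smul_right,
      real_inner_self_eq_norm_sq]
    rw [if_pos trivial]
    show ‖a⁻¹ • ξ‖ ^ 2 = 1
    rw [norm_smul, Real.norm_eq_abs, abs_of_pos (inv_pos.mpr ha),
      inv_mul_cancel₀ ha.ne', one_pow]
  obtain ⟨b, hb⟩ := horth.exists_orthonormalBasis_extension_of_card_eq hcard
  have hb0 : b 0 = a⁻¹ • ξ := hb 0 rfl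
  -- w = b.repr ξ
  set w : EuclideanSpace ℝ (Fin 3) := b.repr ξ with hw
  have hw0 : w 0 = a := by
    rw [hw, OrthonormalBasis.repr_apply_apply, hb0, real_inner_smul_left,
      real_inner_self_eq_norm_sq]
    field_simp
    ring
  have hwi : ∀ i : Fin 3, i ≠ 0 → w i = 0 := by
    intro i hi
    have hξb : ξ = a • b 0 := by rw [hb0, smul_smul, mul_inv_cancel₀ ha.ne', one_smul]
    rw [hw, OrthonormalBasis.repr_apply_apply, hξb, real_inner_smul_right]
    have := b.orthonormal
    rw [orthonormal_iff_ite] at this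
    rw [this i 0, if_neg hi, mul_zero]
  have step1 : ∫⁻ ζ, F ‖ξ - ζ‖ * G ‖ζ‖
      = ∫⁻ y : EuclideanSpace ℝ (Fin 3), F ‖w - y‖ * G ‖y‖ := by
    have hmeas : Measurable fun y : EuclideanSpace ℝ (Fin 3) => F ‖w - y‖ * G ‖y‖ :=
      (hF.comp ((continuous_const.sub continuous_id).norm.measurable)).mul
        (hG.comp measurable_norm)
    calc ∫⁻ ζ, F ‖ξ - ζ‖ * G ‖ζ‖
        = ∫⁻ ζ, F ‖w - b.repr ζ‖ * G ‖b.repr ζ‖ := by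
          apply lintegral_congr fun ζ => ?_
          rw [hw, ← LinearIsometryEquiv.map_sub, LinearIsometryEquiv.norm_map,
            LinearIsometryEquiv.norm_map]
      _ = _ := b.measurePreserving_repr.lintegral_comp hmeas
  -- coordinates map
  set Φ : ℝ × ℝ × ℝ → EuclideanSpace ℝ (Fin 3) := fun q =>
    (MeasurableEquiv.toLp 2 (Fin 3 → ℝ))
      ((MeasurableEquiv.piFinSuccAbove (fun _ : Fin 3 => ℝ) 0).symm
        (q.1, MeasurableEquiv.finTwoArrow.symm q.2)) with hΦ
  have hΦ_mp : MeasurePreserving Φ volume volume := by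
    have h1 := (EuclideanSpace.volume_preserving_symm_measurableEquiv_toLp (Fin 3)).symm
    have h2 := (volume_preserving_piFinSuccAbove (fun _ : Fin 3 => ℝ) 0).symm
    have h3 := (MeasurePreserving.id (volume : Measure ℝ)).prod
      (volume_preserving_finTwoArrow ℝ).symm
    exact (h1.comp h2).comp h3
  have hveval : ∀ q : ℝ × ℝ × ℝ, ∀ j : Fin 3, Φ q j = ![q.1, q.2.1, q.2.2] j := by
    intro q j
    have h4 : (MeasurableEquiv.finTwoArrow.symm q.2 : Fin 2 → ℝ) = ![q.2.1, q.2.2] := by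
      ext i
      fin_cases i <;> rfl
    have h5 : ((MeasurableEquiv.piFinSuccAbove (fun _ : Fin 3 => ℝ) 0).symm
        (q.1, MeasurableEquiv.finTwoArrow.symm q.2)) = Fin.cons q.1 ![q.2.1, q.2.2] := by
      rw [← h4]
      simp [MeasurableEquiv.piFinSuccAbove]
      ext j
      exact Fin.cases rfl (fun i => by simp) j
    have h6 : Φ q j = ((MeasurableEquiv.piFinSuccAbove (fun _ : Fin 3 => ℝ) 0).symm
        (q.1, MeasurableEquiv.finTwoArrow.symm q.2)) j := by
      rw [hΦ]
      simp [MeasurableEquiv.coe_toLp]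
    rw [h6, h5]
    exact Fin.cases rfl (fun i => by fin_cases i <;> rfl) j
  have hnorm1 : ∀ q : ℝ × ℝ × ℝ,
      ‖Φ q‖ = Real.sqrt (q.1 ^ 2 + (q.2.1 ^ 2 + q.2.2 ^ 2)) := by
    intro q
    rw [EuclideanSpace.norm_eq]
    simp only [Fin.sum_univ_three, hveval, Real.norm_eq_abs, sq_abs]
    congr 1
    simp [Matrix.cons_val_zero, Matrix.cons_val_one]
    ring
  have hnorm2 : ∀ q : ℝ × ℝ × ℝ,
      ‖w - Φ q‖ = Real.sqrt ((a - q.1) ^ 2 + (q.2.1 ^ 2 + q.2.2 ^ 2)) := by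
    intro q
    rw [EuclideanSpace.norm_eq]
    have hsub : ∀ j : Fin 3, (w - Φ q) j = w j - Φ q j := fun j => rfl
    simp only [Fin.sum_univ_three, hsub, hveval, Real.norm_eq_abs, sq_abs,
      hw0, hwi 1 (by decide), hwi 2 (by decide)]
    congr 1
    simp [Matrix.cons_val_zero, Matrix.cons_val_one]
    ring
  have hmeasw : Measurable fun y : EuclideanSpace ℝ (Fin 3) => F ‖w - y‖ * G ‖y‖ :=
    (hF.comp ((continuous_const.sub continuous_id).norm.measurable)).mul
      (hG.comp measurable_norm)
  rw [step1, ← hΦ_mp.lintegral_comp hmeasw]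
  apply lintegral_congr fun q => ?_
  rw [hnorm1, hnorm2]


lemma restrict_sub_Ioi {s : Set ℝ} (hs : MeasurableSet s) (hsub : s ⊆ Ioi 0) (g : ℝ → ℝ≥0∞) :
    ∫⁻ x in s, g x = ∫⁻ x in Ioi (0:ℝ), s.indicator g x := by
  rw [lintegral_indicator hs, Measure.restrict_restrict hs,
    inter_eq_self_of_subset_left hsub]

lemma main_aux (F G : ℝ → ℝ≥0∞) (hF : Measurable F) (hG : Measurable G)
    {a : ℝ} (ha : 0 < a) :
    ∫⁻ q : ℝ × ℝ × ℝ,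
        F (Real.sqrt ((a - q.1) ^ 2 + (q.2.1 ^ 2 + q.2.2 ^ 2))) *
          G (Real.sqrt (q.1 ^ 2 + (q.2.1 ^ 2 + q.2.2 ^ 2))) =
      ENNReal.ofReal (2 * Real.pi / a) *
        ∫⁻ ρ in Ioi (0 : ℝ), ∫⁻ τ in Ioi (0 : ℝ),
          (if |ρ - τ| ≤ a ∧ a ≤ ρ + τ then
            ENNReal.ofReal ρ * ENNReal.ofReal τ * F ρ * G τ else 0) := by
  classical
  -- basic measurability facts
  have hsqrtm : ∀ (u v : ℝ × ℝ × ℝ → ℝ), Measurable u → Measurable v →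
      Measurable fun q => Real.sqrt (u q + v q) := fun u v hu hv =>
    Real.continuous_sqrt.measurable.comp (hu.add hv)
  set Body : ℝ × ℝ → ℝ≥0∞ := fun p =>
    ENNReal.ofReal p.2 * (F p.2 * G (Real.sqrt (p.2 ^ 2 - (a - p.1) ^ 2 + p.1 ^ 2))) with hBody_def
  have hBody : Measurable Body := by
    apply (measurable_snd.ennreal_ofReal).mul
    apply (hF.comp measurable_snd).mul
    apply hG.comp
    apply Real.continuous_sqrt.measurable.comp
    fun_prop
  set S : Set (ℝ × ℝ) := {p : ℝ × ℝ | |a - p.1| < p.2} with hS_def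
  have hS : MeasurableSet S :=
    measurableSet_lt (by fun_prop) measurable_snd
  -- Fubini to iterated integral
  have hmeas3 : Measurable fun q : ℝ × ℝ × ℝ =>
      F (Real.sqrt ((a - q.1) ^ 2 + (q.2.1 ^ 2 + q.2.2 ^ 2))) *
        G (Real.sqrt (q.1 ^ 2 + (q.2.1 ^ 2 + q.2.2 ^ 2))) := by
    apply Measurable.mul
    · exact hF.comp (Real.continuous_sqrt.measurable.comp (by fun_prop))
    · exact hG.comp (Real.continuous_sqrt.measurable.comp (by fun_prop))
  rw [Measure.volume_eq_prod, lintegral_prod _ hmeas3.aemeasurable]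
  -- per-z reduction to the ρ-integral with indicator
  have hz : ∀ z : ℝ,
      (∫⁻ y : ℝ × ℝ, F (Real.sqrt ((a - z) ^ 2 + (y.1 ^ 2 + y.2 ^ 2))) *
          G (Real.sqrt (z ^ 2 + (y.1 ^ 2 + y.2 ^ 2)))) =
        ENNReal.ofReal (2 * Real.pi) *
          ∫⁻ ρ in Ioi (0:ℝ), S.indicator Body (z, ρ) := by
    intro z
    have hh : Measurable fun r : ℝ =>
        F (Real.sqrt ((a - z) ^ 2 + r ^ 2)) * G (Real.sqrt (z ^ 2 + r ^ 2)) := by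
      apply Measurable.mul
      · exact hF.comp (Real.continuous_sqrt.measurable.comp (by fun_prop))
      · exact hG.comp (Real.continuous_sqrt.measurable.comp (by fun_prop))
    have h1 : (∫⁻ y : ℝ × ℝ, F (Real.sqrt ((a - z) ^ 2 + (y.1 ^ 2 + y.2 ^ 2))) *
          G (Real.sqrt (z ^ 2 + (y.1 ^ 2 + y.2 ^ 2)))) =
        ∫⁻ y : ℝ × ℝ,
          (fun r : ℝ => F (Real.sqrt ((a - z) ^ 2 + r ^ 2)) * G (Real.sqrt (z ^ 2 + r ^ 2)))
            (Real.sqrt (y.1 ^ 2 + y.2 ^ 2)) := by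
      apply lintegral_congr fun y => ?_
      beta_reduce
      rw [Real.sq_sqrt (by positivity : (0:ℝ) ≤ y.1 ^ 2 + y.2 ^ 2)]
    rw [h1, lintegral_rtwo _ hh]
    congr 1
    rw [sub_rho F G (a - z) z,
      restrict_sub_Ioi measurableSet_Ioi (Ioi_subset_Ioi (abs_nonneg _))]
    apply setLIntegral_congr_fun measurableSet_Ioi
    refine fun ρ _ => ?_
    beta_reduce
    by_cases hmem : |a - z| < ρ
    · rw [Set.indicator_of_mem (mem_Ioi.mpr hmem),
        Set.indicator_of_mem (show (z, ρ) ∈ S from hmem)]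
    · rw [Set.indicator_of_notMem (show ρ ∉ Ioi |a - z| from hmem),
        Set.indicator_of_notMem (show (z, ρ) ∉ S from hmem)]
  rw [lintegral_congr hz, lintegral_const_mul' _ _ ENNReal.ofReal_ne_top]
  -- swap the order of integration
  have hswap : (∫⁻ z : ℝ, ∫⁻ ρ in Ioi (0:ℝ), S.indicator Body (z, ρ)) =
      ∫⁻ ρ in Ioi (0:ℝ), ∫⁻ z : ℝ, S.indicator Body (z, ρ) :=
    lintegral_lintegral_swap ((hBody.indicator hS).aemeasurable)
  rw [hswap]
  -- inner computation for each ρ > 0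
  have hρstep : ∀ ρ : ℝ, ρ ∈ Ioi (0:ℝ) →
      (∫⁻ z : ℝ, S.indicator Body (z, ρ)) =
        ENNReal.ofReal a⁻¹ *
          ∫⁻ τ in Ioi (0:ℝ),
            (if |ρ - τ| ≤ a ∧ a ≤ ρ + τ then
              ENNReal.ofReal ρ * ENNReal.ofReal τ * F ρ * G τ else 0) := by
    intro ρ hρ
    have hρ' : (0:ℝ) < ρ := hρ
    have hGz : Measurable fun z : ℝ => G (Real.sqrt (ρ ^ 2 - a ^ 2 + 2 * a * z)) :=
      hG.comp (Real.continuous_sqrt.measurable.comp (by fun_prop))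
    have e1 : (∫⁻ z : ℝ, S.indicator Body (z, ρ)) =
        ∫⁻ z in Ioo (a - ρ) (a + ρ), (ENNReal.ofReal ρ * F ρ) *
          G (Real.sqrt (ρ ^ 2 - a ^ 2 + 2 * a * z)) := by
      have e0 : ∀ z : ℝ, S.indicator Body (z, ρ) =
          (Ioo (a - ρ) (a + ρ)).indicator
            (fun z => (ENNReal.ofReal ρ * F ρ) *
              G (Real.sqrt (ρ ^ 2 - a ^ 2 + 2 * a * z))) z := by
        intro z
        have harg : ρ ^ 2 - (a - z) ^ 2 + z ^ 2 = ρ ^ 2 - a ^ 2 + 2 * a * z := by ring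
        have hiff : ((z, ρ) ∈ S) ↔ z ∈ Ioo (a - ρ) (a + ρ) := by
          simp only [hS_def, mem_setOf_eq, mem_Ioo, abs_lt]
          constructor <;> rintro ⟨h1, h2⟩ <;> constructor <;> linarith
        by_cases hmem : z ∈ Ioo (a - ρ) (a + ρ)
        · rw [Set.indicator_of_mem hmem, Set.indicator_of_mem (hiff.mpr hmem)]
          simp only [hBody_def, harg, mul_assoc]
        · rw [Set.indicator_of_notMem hmem,
            Set.indicator_of_notMem (fun h => hmem (hiff.mp h))]
      rw [lintegral_congr e0, lintegral_indicator measurableSet_Ioo]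
    have hind : Measurable fun τ : ℝ =>
        (Ioo |ρ - a| (ρ + a)).indicator (fun τ => ENNReal.ofReal (τ / a) * G τ) τ :=
      (((measurable_id.div_const a).ennreal_ofReal).mul hG).indicator measurableSet_Ioo
    rw [e1, lintegral_const_mul _ hGz, sub_tau G ha hρ',
      restrict_sub_Ioi measurableSet_Ioo
        (fun τ hτ => lt_of_le_of_lt (abs_nonneg _) hτ.1),
      ← lintegral_const_mul _ hind,
      ← lintegral_const_mul' _ _ ENNReal.ofReal_ne_top]
    apply lintegral_congr_ae
    have hnull : ∀ᵐ τ : ℝ ∂(volume.restrict (Ioi (0:ℝ))), τ ≠ |ρ - a| ∧ τ ≠ ρ + a := by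
      refine ae_restrict_of_ae ?_
      have h1 : (volume ({|ρ - a|, ρ + a} : Set ℝ)) = 0 :=
        Set.Finite.measure_zero (by simp) volume
      filter_upwards [compl_mem_ae_iff.mpr h1] with τ hτ
      simpa using hτ
    filter_upwards [hnull] with τ hτ
    obtain ⟨hτ1, hτ2⟩ := hτ
    by_cases hmem : τ ∈ Ioo |ρ - a| (ρ + a)
    · have h1 : |ρ - a| < τ := hmem.1
      have h2 : τ < ρ + a := hmem.2
      obtain ⟨h3, h4⟩ := abs_lt.mp h1
      have hτ0 : (0:ℝ) ≤ τ := le_trans (abs_nonneg _) h1.le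
      rw [Set.indicator_of_mem hmem,
        if_pos ⟨abs_sub_le_iff.mpr ⟨by linarith, by linarith⟩, by linarith⟩,
        div_eq_mul_inv, ENNReal.ofReal_mul hτ0]
      ring
    · rw [Set.indicator_of_notMem hmem, mul_zero, if_neg, mul_zero]
      rintro ⟨h1, h2⟩
      rw [abs_sub_le_iff] at h1
      apply hmem
      have hle : |ρ - a| ≤ τ := abs_sub_le_iff.mpr ⟨by linarith [h1.1], by linarith⟩
      exact ⟨lt_of_le_of_ne hle (Ne.symm hτ1), lt_of_le_of_ne (by linarith [h1.2]) hτ2⟩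
  rw [setLIntegral_congr_fun measurableSet_Ioi hρstep,
    lintegral_const_mul' _ _ ENNReal.ofReal_ne_top, ← mul_assoc,
    ← ENNReal.ofReal_mul (by positivity : (0:ℝ) ≤ 2 * Real.pi), mul_comm,
    ← div_eq_mul_inv]
  exact mul_comm _ _


end RadialAux

/-- Polar-coordinate formula for convolutions of radial functions on `ℝ³`:
`∫ F(|ξ−ζ|) G(|ζ|) dζ = (2π/|ξ|) ∫₀^∞∫₀^∞ ρτ F(ρ)G(τ) 𝟙{|ρ−τ| ≤ |ξ| ≤ ρ+τ} dρ dτ`. -/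
theorem statement3 (F G : ℝ → ℝ≥0∞) (hF : Measurable F) (hG : Measurable G)
    (ξ : E3) (hξ : ξ ≠ 0) :
    ∫⁻ ζ, F ‖ξ - ζ‖ * G ‖ζ‖ =
      ENNReal.ofReal (2 * Real.pi / ‖ξ‖) *
        ∫⁻ ρ in Ioi (0 : ℝ), ∫⁻ τ in Ioi (0 : ℝ),
          (if |ρ - τ| ≤ ‖ξ‖ ∧ ‖ξ‖ ≤ ρ + τ then
            ENNReal.ofReal ρ * ENNReal.ofReal τ * F ρ * G τ else 0) := by
  rw [RadialAux.coords F G hF hG ξ hξ]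
  exact RadialAux.main_aux F G hF hG (norm_pos_iff.mpr hξ)
end
end

section
/- Fix parameters (c_σ, b_σ), (c_μ, b_μ), (c_ν, b_ν) with c_σ, c_μ, c_ν > 0 and b_σ, b_μ, b_ν ∈ ℝ∖{0}, and let Φ⁺ be the associated one-dimensional phase. Then: (i) for every (α, β) ∈ ℝ² with (α, β) ≠ (0,0), at least one of the four quantities Φ⁺(α,β), ∂_βΦ⁺(α,β), ∂_β²Φ⁺(α,β), ∂_β³Φ⁺(α,β) is nonzero; (ii) consequently, for every K ≥ 1 there exists c > 0, depending on K and the parameters, such that max_{0 ≤ j ≤ 3} |∂_β^j Φ⁺(α,β)| ≥ c whenever |α|, |β|, |α−β| all lie in the interval [K^{−1}, K]. -/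
noncomputable section

/-- `Λ_τ(x) = sgn(b_τ)·√(c_τ² x² + b_τ²)` on the real line. -/
def Lam1 (c b x : ℝ) : ℝ := Real.sign b * Real.sqrt (c ^ 2 * x ^ 2 + b ^ 2)

/-- The one-dimensional phase `Φ⁺(α,β) = Λ_σ(α) − Λ_μ(α−β) − Λ_ν(β)`. -/
def PhiP (cσ bσ cμ bμ cν bν α β : ℝ) : ℝ :=
  Lam1 cσ bσ α - Lam1 cμ bμ (α - β) - Lam1 cν bν β

def L1f (c b x : ℝ) : ℝ := Real.sign b * (c ^ 2 * x / Real.sqrt (c ^ 2 * x ^ 2 + b ^ 2))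
def L2f (c b x : ℝ) : ℝ := Real.sign b * (c ^ 2 * b ^ 2 / (Real.sqrt (c ^ 2 * x ^ 2 + b ^ 2)) ^ 3)
def L3f (c b x : ℝ) : ℝ := Real.sign b * (-3 * c ^ 4 * b ^ 2 * x / (Real.sqrt (c ^ 2 * x ^ 2 + b ^ 2)) ^ 5)

lemma Qpos (c b x : ℝ) (hb : b ≠ 0) : 0 < c ^ 2 * x ^ 2 + b ^ 2 := by positivity

lemma sqrtQ_pos (c b x : ℝ) (hb : b ≠ 0) : 0 < Real.sqrt (c ^ 2 * x ^ 2 + b ^ 2) :=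
  Real.sqrt_pos.mpr (Qpos c b x hb)

lemma sq_sqrtQ (c b x : ℝ) (hb : b ≠ 0) :
    (Real.sqrt (c ^ 2 * x ^ 2 + b ^ 2)) ^ 2 = c ^ 2 * x ^ 2 + b ^ 2 :=
  Real.sq_sqrt (Qpos c b x hb).le

lemma hasDerivAt_sqrtQ (c b x : ℝ) (hb : b ≠ 0) :
    HasDerivAt (fun x => Real.sqrt (c ^ 2 * x ^ 2 + b ^ 2))
      (c ^ 2 * x / Real.sqrt (c ^ 2 * x ^ 2 + b ^ 2)) x := by
  have hq : HasDerivAt (fun x : ℝ => c ^ 2 * x ^ 2 + b ^ 2) (2 * (c ^ 2 * x)) x := by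
    have := ((hasDerivAt_pow 2 x).const_mul (c ^ 2)).add_const (b ^ 2)
    exact this.congr_deriv (by ring)
  have hs := (Real.hasDerivAt_sqrt (ne_of_gt (Qpos c b x hb))).comp x hq
  refine hs.congr_deriv ?_
  field_simp

lemma hasDerivAt_Lam1 (c b x : ℝ) (hb : b ≠ 0) :
    HasDerivAt (fun x => Lam1 c b x) (L1f c b x) x := by
  unfold Lam1 L1f
  exact (hasDerivAt_sqrtQ c b x hb).const_mul _

lemma hasDerivAt_L1f (c b x : ℝ) (hb : b ≠ 0) :
    HasDerivAt (fun x => L1f c b x) (L2f c b x) x := by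
  have hA0 := (sqrtQ_pos c b x hb).ne'
  have hA2 := sq_sqrtQ c b x hb
  have hnum : HasDerivAt (fun x : ℝ => c ^ 2 * x) (c ^ 2) x := by
    simpa using (hasDerivAt_id x).const_mul (c ^ 2)
  have hdiv := hnum.div (hasDerivAt_sqrtQ c b x hb) hA0
  unfold L1f L2f
  refine (hdiv.const_mul (Real.sign b)).congr_deriv ?_
  set A := Real.sqrt (c ^ 2 * x ^ 2 + b ^ 2) with hA
  field_simp
  linear_combination (Real.sign b * c ^ 2) * hA2


lemma hasDerivAt_L2f (c b x : ℝ) (hb : b ≠ 0) :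
    HasDerivAt (fun x => L2f c b x) (L3f c b x) x := by
  have hA0 := (sqrtQ_pos c b x hb).ne'
  have hA2 := sq_sqrtQ c b x hb
  have hden : HasDerivAt (fun x : ℝ => (Real.sqrt (c ^ 2 * x ^ 2 + b ^ 2)) ^ 3)
      (3 * (Real.sqrt (c ^ 2 * x ^ 2 + b ^ 2)) ^ 2 * (c ^ 2 * x / Real.sqrt (c ^ 2 * x ^ 2 + b ^ 2))) x := by
    have := (hasDerivAt_sqrtQ c b x hb).pow 3
    exact this.congr_deriv (by norm_num)
  have hdiv := (hasDerivAt_const x (c ^ 2 * b ^ 2)).div hden (by positivity)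
  unfold L2f L3f
  refine (hdiv.const_mul (Real.sign b)).congr_deriv ?_
  set A := Real.sqrt (c ^ 2 * x ^ 2 + b ^ 2) with hA
  field_simp
  ring

def D1P (cμ bμ cν bν α β : ℝ) : ℝ := L1f cμ bμ (α - β) - L1f cν bν β
def D2P (cμ bμ cν bν α β : ℝ) : ℝ := -L2f cμ bμ (α - β) - L2f cν bν β
def D3P (cμ bμ cν bν α β : ℝ) : ℝ := L3f cμ bμ (α - β) - L3f cν bν β

section
variable (cσ bσ cμ bμ cν bν α β : ℝ)

lemma hasDerivAt_PhiP (hbμ : bμ ≠ 0) (hbν : bν ≠ 0) :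
    HasDerivAt (fun y => PhiP cσ bσ cμ bμ cν bν α y) (D1P cμ bμ cν bν α β) β := by
  have hμ : HasDerivAt (fun y : ℝ => Lam1 cμ bμ (α - y)) (-L1f cμ bμ (α - β)) β := by
    have := (hasDerivAt_Lam1 cμ bμ (α - β) hbμ).comp β ((hasDerivAt_id β).const_sub α)
    exact this.congr_deriv (by ring)
  have hν := hasDerivAt_Lam1 cν bν β hbν
  have := ((hasDerivAt_const β (Lam1 cσ bσ α)).sub hμ).sub hν
  unfold PhiP D1P
  exact this.congr_deriv (by ring)

lemma hasDerivAt_D1P (hbμ : bμ ≠ 0) (hbν : bν ≠ 0) :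
    HasDerivAt (fun y => D1P cμ bμ cν bν α y) (D2P cμ bμ cν bν α β) β := by
  have hμ : HasDerivAt (fun y : ℝ => L1f cμ bμ (α - y)) (-L2f cμ bμ (α - β)) β := by
    have := (hasDerivAt_L1f cμ bμ (α - β) hbμ).comp β ((hasDerivAt_id β).const_sub α)
    exact this.congr_deriv (by ring)
  have hν := hasDerivAt_L1f cν bν β hbν
  have := hμ.sub hν
  unfold D1P D2P
  exact this

lemma hasDerivAt_D2P (hbμ : bμ ≠ 0) (hbν : bν ≠ 0) :
    HasDerivAt (fun y => D2P cμ bμ cν bν α y) (D3P cμ bμ cν bν α β) β := by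
  have hμ : HasDerivAt (fun y : ℝ => -L2f cμ bμ (α - y)) (L3f cμ bμ (α - β)) β := by
    have := (((hasDerivAt_L2f cμ bμ (α - β) hbμ).comp β ((hasDerivAt_id β).const_sub α))).neg
    exact this.congr_deriv (by ring)
  have hν := hasDerivAt_L2f cν bν β hbν
  have := hμ.sub hν
  unfold D2P D3P
  exact this

lemma iteratedDeriv_PhiP (hbμ : bμ ≠ 0) (hbν : bν ≠ 0) :
    iteratedDeriv 0 (fun y => PhiP cσ bσ cμ bμ cν bν α y) β = PhiP cσ bσ cμ bμ cν bν α β ∧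
    iteratedDeriv 1 (fun y => PhiP cσ bσ cμ bμ cν bν α y) β = D1P cμ bμ cν bν α β ∧
    iteratedDeriv 2 (fun y => PhiP cσ bσ cμ bμ cν bν α y) β = D2P cμ bμ cν bν α β ∧
    iteratedDeriv 3 (fun y => PhiP cσ bσ cμ bμ cν bν α y) β = D3P cμ bμ cν bν α β := by
  have h1 : deriv (fun y => PhiP cσ bσ cμ bμ cν bν α y) = fun y => D1P cμ bμ cν bν α y :=
    funext fun y => (hasDerivAt_PhiP cσ bσ cμ bμ cν bν α y hbμ hbν).deriv
  have h2 : deriv (fun y => D1P cμ bμ cν bν α y) = fun y => D2P cμ bμ cν bν α y :=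
    funext fun y => (hasDerivAt_D1P cμ bμ cν bν α y hbμ hbν).deriv
  have h3 : deriv (fun y => D2P cμ bμ cν bν α y) = fun y => D3P cμ bμ cν bν α y :=
    funext fun y => (hasDerivAt_D2P cμ bμ cν bν α y hbμ hbν).deriv
  refine ⟨by simp [iteratedDeriv_zero], ?_, ?_, ?_⟩
  · rw [iteratedDeriv_one, h1]
  · rw [show (2:ℕ) = 1 + 1 from rfl, iteratedDeriv_succ', h1, iteratedDeriv_one, h2]
  · rw [show (3:ℕ) = 2 + 1 from rfl, iteratedDeriv_succ', h1,
      show (2:ℕ) = 1 + 1 from rfl, iteratedDeriv_succ', h2, iteratedDeriv_one, h3]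
end

-- mixed-sign auxiliary lemma
lemma mixed_aux (cμ bμ cν bν u v A B : ℝ) (hcμ : 0 < cμ) (hcν : 0 < cν)
    (_hbμ : bμ ≠ 0) (hbν : bν ≠ 0) (hA : 0 < A) (hB : 0 < B)
    (e1 : cμ ^ 2 * u * B + cν ^ 2 * v * A = 0)
    (e2 : cν ^ 2 * bν ^ 2 * A ^ 3 = cμ ^ 2 * bμ ^ 2 * B ^ 3)
    (e3 : cμ ^ 4 * bμ ^ 2 * u * B ^ 5 + cν ^ 4 * bν ^ 2 * v * A ^ 5 = 0) :
    (u = 0 ∧ v = 0) ∨ A = B := by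
  have h4 : cν ^ 2 * bν ^ 2 * A ^ 3 * (cμ ^ 2 * u * B ^ 2 + cν ^ 2 * v * A ^ 2) = 0 := by
    linear_combination (cμ ^ 2 * u * B ^ 2) * e2 + e3
  have hfac : (cν ^ 2 * bν ^ 2 * A ^ 3) ≠ 0 := by positivity
  have h5 : cμ ^ 2 * u * B ^ 2 + cν ^ 2 * v * A ^ 2 = 0 := by
    rcases mul_eq_zero.mp h4 with h | h
    · exact absurd h hfac
    · exact h
  have h6 : cν ^ 2 * A * (v * (A - B)) = 0 := by linear_combination h5 - B * e1
  have h7 : v * (A - B) = 0 := by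
    rcases mul_eq_zero.mp h6 with h | h
    · exact absurd h (by positivity)
    · exact h
  rcases mul_eq_zero.mp h7 with hv | hAB
  · left
    refine ⟨?_, hv⟩
    have : cμ ^ 2 * B * u = 0 := by linear_combination e1 - cν ^ 2 * A * hv
    rcases mul_eq_zero.mp this with h | h
    · exact absurd h (by positivity)
    · exact h
  · right; linarith

lemma key_vanish (cσ bσ cμ bμ cν bν α β : ℝ)
    (hcσ : 0 < cσ) (hcμ : 0 < cμ) (hcν : 0 < cν)
    (hbσ : bσ ≠ 0) (hbμ : bμ ≠ 0) (hbν : bν ≠ 0)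
    (h0 : PhiP cσ bσ cμ bμ cν bν α β = 0)
    (h1 : D1P cμ bμ cν bν α β = 0)
    (h2 : D2P cμ bμ cν bν α β = 0)
    (h3 : D3P cμ bμ cν bν α β = 0) : α = 0 ∧ β = 0 := by
  simp only [PhiP, D1P, D2P, D3P, Lam1, L1f, L2f, L3f] at h0 h1 h2 h3
  set u := α - β with hu
  set A := Real.sqrt (cμ ^ 2 * u ^ 2 + bμ ^ 2) with hA
  set B := Real.sqrt (cν ^ 2 * β ^ 2 + bν ^ 2) with hB
  set C := Real.sqrt (cσ ^ 2 * α ^ 2 + bσ ^ 2) with hC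
  have hA0 : 0 < A := Real.sqrt_pos.mpr (by positivity)
  have hB0 : 0 < B := Real.sqrt_pos.mpr (by positivity)
  have hC0 : 0 < C := Real.sqrt_pos.mpr (by positivity)
  have hsμ : Real.sign bμ = 1 ∨ Real.sign bμ = -1 := by
    rcases hbμ.lt_or_gt with h | h
    · right; exact Real.sign_of_neg h
    · left; exact Real.sign_of_pos h
  have hsν : Real.sign bν = 1 ∨ Real.sign bν = -1 := by
    rcases hbν.lt_or_gt with h | h
    · right; exact Real.sign_of_neg h
    · left; exact Real.sign_of_pos h
  have hsσ : Real.sign bσ = 1 ∨ Real.sign bσ = -1 := by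
    rcases hbσ.lt_or_gt with h | h
    · right; exact Real.sign_of_neg h
    · left; exact Real.sign_of_pos h
  rcases hsμ with hμ1 | hμ1 <;> rcases hsν with hν1 | hν1 <;>
    rw [hμ1, hν1] at h0 h1 h2 h3 <;>
    [skip; skip; skip; skip]
  · -- s=1,1 : contradiction from h2
    exfalso
    have hp : (0:ℝ) < cμ ^ 2 * bμ ^ 2 / A ^ 3 + cν ^ 2 * bν ^ 2 / B ^ 3 := by positivity
    linarith
  · -- s=1,-1
    field_simp at h1 h2 h3
    have e1 : cμ ^ 2 * u * B + cν ^ 2 * β * A = 0 := by linear_combination h1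
    have e2 : cν ^ 2 * bν ^ 2 * A ^ 3 = cμ ^ 2 * bμ ^ 2 * B ^ 3 := by linear_combination h2
    have e3 : cμ ^ 4 * bμ ^ 2 * u * B ^ 5 + cν ^ 4 * bν ^ 2 * β * A ^ 5 = 0 := by
      linear_combination (-1/3 : ℝ) * h3
    rcases mixed_aux cμ bμ cν bν u β A B hcμ hcν hbμ hbν hA0 hB0 e1 e2 e3 with ⟨hu0, hv0⟩ | hAB
    · exact ⟨by linarith, hv0⟩
    · exfalso
      rcases hsσ with hσ1 | hσ1 <;> rw [hσ1] at h0 <;> linarith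
  · -- s=-1,1
    field_simp at h1 h2 h3
    have e1 : cμ ^ 2 * u * B + cν ^ 2 * β * A = 0 := by linear_combination -h1
    have e2 : cν ^ 2 * bν ^ 2 * A ^ 3 = cμ ^ 2 * bμ ^ 2 * B ^ 3 := by linear_combination -h2
    have e3 : cμ ^ 4 * bμ ^ 2 * u * B ^ 5 + cν ^ 4 * bν ^ 2 * β * A ^ 5 = 0 := by
      linear_combination (1/3 : ℝ) * h3
    rcases mixed_aux cμ bμ cν bν u β A B hcμ hcν hbμ hbν hA0 hB0 e1 e2 e3 with ⟨hu0, hv0⟩ | hAB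
    · exact ⟨by linarith, hv0⟩
    · exfalso
      rcases hsσ with hσ1 | hσ1 <;> rw [hσ1] at h0 <;> linarith
  · -- s=-1,-1
    exfalso
    have hp : (0:ℝ) < cμ ^ 2 * bμ ^ 2 / A ^ 3 + cν ^ 2 * bν ^ 2 / B ^ 3 := by positivity
    linarith

-- continuity lemmas
lemma cont_sqrtQ {f : ℝ × ℝ → ℝ} (c b : ℝ) (hf : Continuous f) :
    Continuous fun p => Real.sqrt (c ^ 2 * (f p) ^ 2 + b ^ 2) :=
  Real.continuous_sqrt.comp ((continuous_const.mul (hf.pow 2)).add continuous_const)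

lemma cont_Lam1 {f : ℝ × ℝ → ℝ} (c b : ℝ) (hf : Continuous f) :
    Continuous fun p => Lam1 c b (f p) :=
  continuous_const.mul (cont_sqrtQ c b hf)

lemma cont_L1f {f : ℝ × ℝ → ℝ} (c b : ℝ) (hb : b ≠ 0) (hf : Continuous f) :
    Continuous fun p => L1f c b (f p) := by
  unfold L1f
  exact continuous_const.mul ((continuous_const.mul hf).div (cont_sqrtQ c b hf)
    fun p => (Real.sqrt_pos.mpr (by positivity)).ne')

lemma cont_L2f {f : ℝ × ℝ → ℝ} (c b : ℝ) (hb : b ≠ 0) (hf : Continuous f) :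
    Continuous fun p => L2f c b (f p) := by
  unfold L2f
  exact continuous_const.mul (continuous_const.div ((cont_sqrtQ c b hf).pow 3)
    fun p => pow_ne_zero _ (Real.sqrt_pos.mpr (by positivity)).ne')

lemma cont_L3f {f : ℝ × ℝ → ℝ} (c b : ℝ) (hb : b ≠ 0) (hf : Continuous f) :
    Continuous fun p => L3f c b (f p) := by
  unfold L3f
  exact continuous_const.mul ((continuous_const.mul hf).div ((cont_sqrtQ c b hf).pow 5)
    fun p => pow_ne_zero _ (Real.sqrt_pos.mpr (by positivity)).ne')

/-- Non-degeneracy of the one-dimensional phase: some `β`-derivative of order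
at most `3` is nonzero away from the origin, with a uniform lower bound on
compact frequency annuli. -/
theorem statement5 (cσ bσ cμ bμ cν bν : ℝ)
    (hcσ : 0 < cσ) (hcμ : 0 < cμ) (hcν : 0 < cν)
    (hbσ : bσ ≠ 0) (hbμ : bμ ≠ 0) (hbν : bν ≠ 0) :
    (∀ α β : ℝ, ¬(α = 0 ∧ β = 0) →
      ∃ j ≤ 3, iteratedDeriv j (fun y => PhiP cσ bσ cμ bμ cν bν α y) β ≠ 0) ∧
    (∀ K : ℝ, 1 ≤ K → ∃ c : ℝ, 0 < c ∧
      ∀ α β : ℝ,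
        |α| ∈ Set.Icc K⁻¹ K → |β| ∈ Set.Icc K⁻¹ K → |α - β| ∈ Set.Icc K⁻¹ K →
        ∃ j ≤ 3, c ≤ |iteratedDeriv j (fun y => PhiP cσ bσ cμ bμ cν bν α y) β|) := by
  -- the four derivative values as functions of (α, β)
  set F0 : ℝ × ℝ → ℝ := fun p => PhiP cσ bσ cμ bμ cν bν p.1 p.2 with hF0
  set F1 : ℝ × ℝ → ℝ := fun p => D1P cμ bμ cν bν p.1 p.2 with hF1
  set F2 : ℝ × ℝ → ℝ := fun p => D2P cμ bμ cν bν p.1 p.2 with hF2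
  set F3 : ℝ × ℝ → ℝ := fun p => D3P cμ bμ cν bν p.1 p.2 with hF3
  have hiter : ∀ α β : ℝ,
      iteratedDeriv 0 (fun y => PhiP cσ bσ cμ bμ cν bν α y) β = F0 (α, β) ∧
      iteratedDeriv 1 (fun y => PhiP cσ bσ cμ bμ cν bν α y) β = F1 (α, β) ∧
      iteratedDeriv 2 (fun y => PhiP cσ bσ cμ bμ cν bν α y) β = F2 (α, β) ∧
      iteratedDeriv 3 (fun y => PhiP cσ bσ cμ bμ cν bν α y) β = F3 (α, β) := fun α β =>
    iteratedDeriv_PhiP cσ bσ cμ bμ cν bν α β hbμ hbν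
  -- core: if all four vanish at p then p = 0
  have hkey : ∀ p : ℝ × ℝ, F0 p = 0 → F1 p = 0 → F2 p = 0 → F3 p = 0 →
      p.1 = 0 ∧ p.2 = 0 := fun p h0 h1 h2 h3 =>
    key_vanish cσ bσ cμ bμ cν bν p.1 p.2 hcσ hcμ hcν hbσ hbμ hbν h0 h1 h2 h3
  constructor
  · intro α β hne
    by_contra hcon
    push_neg at hcon
    obtain ⟨hk0, hk1, hk2, hk3⟩ := hiter α β
    exact hne (hkey (α, β)
      (hk0 ▸ hcon 0 (by norm_num)) (hk1 ▸ hcon 1 (by norm_num))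
      (hk2 ▸ hcon 2 (by norm_num)) (hk3 ▸ hcon 3 (by norm_num)))
  · intro K hK
    have hKpos : 0 < K := lt_of_lt_of_le one_pos hK
    have hKinv : 0 < K⁻¹ := by positivity
    set S : Set (ℝ × ℝ) :=
      (fun p : ℝ × ℝ => |p.1|) ⁻¹' Set.Icc K⁻¹ K ∩
        ((fun p : ℝ × ℝ => |p.2|) ⁻¹' Set.Icc K⁻¹ K ∩
          (fun p : ℝ × ℝ => |p.1 - p.2|) ⁻¹' Set.Icc K⁻¹ K) with hS
    -- max of the four absolute values
    set G : ℝ × ℝ → ℝ := fun p => max |F0 p| (max |F1 p| (max |F2 p| |F3 p|)) with hG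
    have hcont0 : Continuous F0 := by
      rw [hF0]; unfold PhiP
      exact ((cont_Lam1 cσ bσ continuous_fst).sub
        (cont_Lam1 cμ bμ (continuous_fst.sub continuous_snd))).sub
        (cont_Lam1 cν bν continuous_snd)
    have hcont1 : Continuous F1 := by
      rw [hF1]; unfold D1P
      exact (cont_L1f cμ bμ hbμ (continuous_fst.sub continuous_snd)).sub
        (cont_L1f cν bν hbν continuous_snd)
    have hcont2 : Continuous F2 := by
      rw [hF2]; unfold D2P
      exact ((cont_L2f cμ bμ hbμ (continuous_fst.sub continuous_snd)).neg).sub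
        (cont_L2f cν bν hbν continuous_snd)
    have hcont3 : Continuous F3 := by
      rw [hF3]; unfold D3P
      exact (cont_L3f cμ bμ hbμ (continuous_fst.sub continuous_snd)).sub
        (cont_L3f cν bν hbν continuous_snd)
    have hcontG : Continuous G :=
      hcont0.abs.max (hcont1.abs.max (hcont2.abs.max hcont3.abs))
    have hGpos : ∀ p ∈ S, 0 < G p := by
      intro p hp
      have hp1 : K⁻¹ ≤ |p.1| := hp.1.1
      have hp1ne : p.1 ≠ 0 := by
        intro h; rw [h] at hp1; simp at hp1; linarith
      by_contra hle
      push_neg at hle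
      have h0 : F0 p = 0 :=
        abs_eq_zero.mp (le_antisymm (le_trans (le_max_left _ _) hle) (abs_nonneg _))
      have h1 : F1 p = 0 :=
        abs_eq_zero.mp (le_antisymm
          (le_trans (le_trans (le_max_left _ _) (le_max_right _ _)) hle) (abs_nonneg _))
      have h2 : F2 p = 0 :=
        abs_eq_zero.mp (le_antisymm
          (le_trans (le_trans (le_trans (le_max_left _ _) (le_max_right _ _))
            (le_max_right _ _)) hle) (abs_nonneg _))
      have h3 : F3 p = 0 :=
        abs_eq_zero.mp (le_antisymm
          (le_trans (le_trans (le_trans (le_max_right _ _) (le_max_right _ _))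
            (le_max_right _ _)) hle) (abs_nonneg _))
      exact hp1ne (hkey p h0 h1 h2 h3).1
    by_cases hSne : S.Nonempty
    · have hclosed : IsClosed S := by
        refine IsClosed.inter ?_ (IsClosed.inter ?_ ?_) <;>
          exact IsClosed.preimage (by fun_prop) isClosed_Icc
      have hsub : S ⊆ Set.Icc (-K) K ×ˢ Set.Icc (-K) K := by
        rintro p ⟨h1, h2, _⟩
        exact ⟨abs_le.mp h1.2, abs_le.mp h2.2⟩
      have hcpt : IsCompact S :=
        (isCompact_Icc.prod isCompact_Icc).of_isClosed_subset hclosed hsub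
      obtain ⟨p₀, hp₀, hmin⟩ := hcpt.exists_isMinOn hSne hcontG.continuousOn
      refine ⟨G p₀, hGpos p₀ hp₀, ?_⟩
      intro α β hα hβ hαβ
      have hmem : (α, β) ∈ S := ⟨hα, hβ, hαβ⟩
      have hle : G p₀ ≤ G (α, β) := hmin hmem
      obtain ⟨hk0, hk1, hk2, hk3⟩ := hiter α β
      rcases le_max_iff.mp hle with h | h
      · exact ⟨0, by norm_num, hk0 ▸ h⟩
      rcases le_max_iff.mp h with h | h
      · exact ⟨1, by norm_num, hk1 ▸ h⟩
      rcases le_max_iff.mp h with h | h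
      · exact ⟨2, by norm_num, hk2 ▸ h⟩
      · exact ⟨3, by norm_num, hk3 ▸ h⟩
    · refine ⟨1, one_pos, ?_⟩
      intro α β hα hβ hαβ
      exact absurd ⟨(α, β), hα, hβ, hαβ⟩ hSne
end
end

section
/- Fix c > 0 and b_σ, b_μ, b_ν > 0, and let Φ be the associated equal-speed phase. If b_σ ≠ b_μ + b_ν, then there is no pair (ξ, η) ∈ ℝ³ × ℝ³ with Φ(ξ,η) = 0 and ∇_ηΦ(ξ,η) = 0. If b_σ = b_μ + b_ν, then the spacetime resonance set {(ξ,η) ∈ ℝ³ × ℝ³ : Φ(ξ,η) = 0 and ∇_ηΦ(ξ,η) = 0} is exactly the set {(ξ, ρξ) : ξ ∈ ℝ³}, where ρ = b_ν/b_σ. -/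
noncomputable section

/-- `Λ_τ(ξ) = √(c²|ξ|² + b_τ²)` (equal speeds, positive masses). -/
def LamP (c b : ℝ) (ξ : E3) : ℝ := Real.sqrt (c ^ 2 * ‖ξ‖ ^ 2 + b ^ 2)

/-- The equal-speed phase `Φ(ξ,η) = Λ_σ(ξ) − Λ_μ(ξ−η) − Λ_ν(η)`. -/
def PhiEq (c bσ bμ bν : ℝ) (ξ η : E3) : ℝ :=
  LamP c bσ ξ - LamP c bμ (ξ - η) - LamP c bν η

lemma lam_pos (c : ℝ) {b : ℝ} (hb : 0 < b) (v : E3) : 0 < LamP c b v :=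
  Real.sqrt_pos.mpr (by positivity)

lemma lam_sq (c b : ℝ) (hb : 0 < b) (v : E3) :
    LamP c b v ^ 2 = c ^ 2 * ‖v‖ ^ 2 + b ^ 2 :=
  Real.sq_sqrt (by positivity)

/-- scaling: `Λ_{t d}(t•ξ) = t Λ_d(ξ)` for `t ≥ 0`. -/
lemma lam_scale (c d : ℝ) {t : ℝ} (ht : 0 ≤ t) (ξ : E3) :
    LamP c (t * d) (t • ξ) = t * LamP c d ξ := by
  unfold LamP
  rw [norm_smul, Real.norm_eq_abs, abs_of_nonneg ht]
  rw [show c ^ 2 * (t * ‖ξ‖) ^ 2 + (t * d) ^ 2 = t ^ 2 * (c ^ 2 * ‖ξ‖ ^ 2 + d ^ 2) by ring,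
    Real.sqrt_mul (sq_nonneg t), Real.sqrt_sq ht]

/-- Forward direction: a resonance point forces `bσ = bμ + bν` and `η = (bν/bσ)•ξ`. -/
lemma forward (c bσ bμ bν : ℝ) (hc : 0 < c) (hσ : 0 < bσ) (hμ : 0 < bμ) (hν : 0 < bν)
    (ξ η : E3) (h1 : PhiEq c bσ bμ bν ξ η = 0)
    (h2 : (c ^ 2 / LamP c bμ (ξ - η)) • (ξ - η) - (c ^ 2 / LamP c bν η) • η = 0) :
    bσ = bμ + bν ∧ η = (bν / bσ) • ξ := by
  set A := LamP c bμ (ξ - η) with hAdef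
  set B := LamP c bν η with hBdef
  have hA : 0 < A := lam_pos c hμ _
  have hB : 0 < B := lam_pos c hν _
  -- from the gradient: ξ - η = (A/B) • η
  have hsub : ξ - η = (A / B) • η := by
    have h2' : (c ^ 2 / A) • (ξ - η) = (c ^ 2 / B) • η := sub_eq_zero.mp h2
    have hc2 : (c:ℝ) ^ 2 ≠ 0 := by positivity
    calc ξ - η = (A / c ^ 2) • ((c ^ 2 / A) • (ξ - η)) := by
          rw [smul_smul]; rw [show A / c ^ 2 * (c ^ 2 / A) = 1 by field_simp]; rw [one_smul]
      _ = (A / c ^ 2) • ((c ^ 2 / B) • η) := by rw [h2']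
      _ = (A / B) • η := by rw [smul_smul]; congr 1; field_simp
  set r := A / B with hrdef
  have hr : 0 < r := div_pos hA hB
  have hnorm : ‖ξ - η‖ = r * ‖η‖ := by
    rw [hsub, norm_smul, Real.norm_eq_abs, abs_of_pos hr]
  have hA2 : A ^ 2 = c ^ 2 * (r * ‖η‖) ^ 2 + bμ ^ 2 := by
    rw [hAdef, lam_sq c bμ hμ, hnorm]
  have hB2 : B ^ 2 = c ^ 2 * ‖η‖ ^ 2 + bν ^ 2 := lam_sq c bν hν η
  have hAB : A = r * B := by rw [hrdef]; field_simp
  have e : r ^ 2 * bν ^ 2 = bμ ^ 2 := by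
    have h' : (r * B) ^ 2 = c ^ 2 * (r * ‖η‖) ^ 2 + bμ ^ 2 := by rw [← hAB]; exact hA2
    linear_combination h' - r ^ 2 * hB2
  have hrval : r * bν = bμ := by
    have h0 : (r * bν - bμ) * (r * bν + bμ) = 0 := by linear_combination e
    rcases mul_eq_zero.mp h0 with h | h
    · linarith
    · nlinarith [mul_pos hr hν]
  have hS : LamP c bσ ξ = A + B := by
    have h1' := h1; unfold PhiEq at h1'
    rw [← hAdef, ← hBdef] at h1'; linarith
  have hξ : ξ = (r + 1) • η := by
    have hx : ξ = (ξ - η) + η := by abel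
    rw [hx, hsub, add_smul, one_smul]
  have hnξ : ‖ξ‖ = (r + 1) * ‖η‖ := by
    rw [hξ, norm_smul, Real.norm_eq_abs, abs_of_pos (by linarith : (0:ℝ) < r + 1)]
  have hS2 : (A + B) ^ 2 = c ^ 2 * ((r + 1) * ‖η‖) ^ 2 + bσ ^ 2 := by
    rw [← hS, lam_sq c bσ hσ, hnξ]
  have key : bσ ^ 2 = ((r + 1) * bν) ^ 2 := by
    have h'' : ((r + 1) * B) ^ 2 = c ^ 2 * ((r + 1) * ‖η‖) ^ 2 + bσ ^ 2 := by
      rw [show (r + 1) * B = A + B by rw [hAB]; ring]; exact hS2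
    linear_combination (r + 1) ^ 2 * hB2 - h''
  have hbσ : bσ = bμ + bν := by
    have h0 : (bσ - (bμ + bν)) * (bσ + (bμ + bν)) = 0 := by
      linear_combination key + (r * bν + bμ + 2 * bν) * hrval
    rcases mul_eq_zero.mp h0 with h | h
    · linarith
    · linarith
  refine ⟨hbσ, ?_⟩
  have hr1 : r + 1 = bσ / bν := by
    rw [hbσ]; field_simp; linarith [hrval]
  rw [hξ, smul_smul, hr1, show bν / bσ * (bσ / bν) = 1 by field_simp, one_smul]

/-- Backward direction: when `bσ = bμ + bν`, every `(ξ, (bν/bσ)•ξ)` is a resonance. -/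
lemma backward (c bσ bμ bν : ℝ) (hc : 0 < c) (hσ : 0 < bσ) (hμ : 0 < bμ) (hν : 0 < bν)
    (hb : bσ = bμ + bν) (ξ : E3) :
    PhiEq c bσ bμ bν ξ ((bν / bσ) • ξ) = 0 ∧
      (c ^ 2 / LamP c bμ (ξ - (bν / bσ) • ξ)) • (ξ - (bν / bσ) • ξ)
        - (c ^ 2 / LamP c bν ((bν / bσ) • ξ)) • ((bν / bσ) • ξ) = 0 := by
  have hξη : ξ - (bν / bσ) • ξ = (bμ / bσ) • ξ := by
    rw [show ξ - (bν / bσ) • ξ = (1 - bν / bσ) • ξ by rw [sub_smul, one_smul]]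
    congr 1
    rw [hb]; field_simp; ring
  set S := LamP c bσ ξ with hSdef
  have hSpos : 0 < S := lam_pos c hσ ξ
  have hAμ : LamP c bμ ((bμ / bσ) • ξ) = (bμ / bσ) * S := by
    have h := lam_scale c bσ (le_of_lt (div_pos hμ hσ)) ξ
    rwa [div_mul_cancel₀ _ hσ.ne'] at h
  have hBν : LamP c bν ((bν / bσ) • ξ) = (bν / bσ) * S := by
    have h := lam_scale c bσ (le_of_lt (div_pos hν hσ)) ξ
    rwa [div_mul_cancel₀ _ hσ.ne'] at h
  constructor
  · unfold PhiEq
    rw [hξη, hAμ, hBν, ← hSdef]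
    rw [hb]; field_simp; ring
  · rw [hξη, hAμ, hBν, smul_smul, smul_smul]
    rw [show c ^ 2 / (bμ / bσ * S) * (bμ / bσ) = c ^ 2 / S by
        field_simp,
      show c ^ 2 / (bν / bσ * S) * (bν / bσ) = c ^ 2 / S by
        field_simp]
    exact sub_self _

lemma phi_hasGradientAt (c bσ bμ bν : ℝ) (hμ : 0 < bμ) (hν : 0 < bν) (ξ η : E3) :
    HasGradientAt (fun y => PhiEq c bσ bμ bν ξ y)
      ((c ^ 2 / LamP c bμ (ξ - η)) • (ξ - η) - (c ^ 2 / LamP c bν η) • η) η := by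
  rw [hasGradientAt_iff_hasFDerivAt]
  have hA : (0:ℝ) < c ^ 2 * ‖ξ - η‖ ^ 2 + bμ ^ 2 := by positivity
  have hB : (0:ℝ) < c ^ 2 * ‖η‖ ^ 2 + bν ^ 2 := by positivity
  have l1 : HasFDerivAt (fun y : E3 => ξ - y) (-(ContinuousLinearMap.id ℝ E3)) η := by
    simpa using (hasFDerivAt_id η).const_sub ξ
  have l2 := l1.norm_sq
  have l3 := (l2.const_mul (c ^ 2)).add_const (bμ ^ 2)
  have l4 := (Real.hasDerivAt_sqrt hA.ne').comp_hasFDerivAt η l3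
  have m2 := (hasFDerivAt_id η).norm_sq
  have m3 := ((m2.const_mul (c ^ 2)).add_const (bν ^ 2))
  have m4 := (Real.hasDerivAt_sqrt hB.ne').comp_hasFDerivAt η m3
  have total := ((hasFDerivAt_const (LamP c bσ ξ) η).sub l4).sub m4
  convert total using 1
  · rfl
  · rfl
  · rfl
  have hsA : Real.sqrt (c ^ 2 * ‖ξ - η‖ ^ 2 + bμ ^ 2) ≠ 0 :=
    (Real.sqrt_pos.mpr hA).ne'
  have hsB : Real.sqrt (c ^ 2 * ‖η‖ ^ 2 + bν ^ 2) ≠ 0 :=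
    (Real.sqrt_pos.mpr hB).ne'
  ext v
  simp only [InnerProductSpace.toDual_apply_apply, ContinuousLinearMap.coe_comp',
    ContinuousLinearMap.coe_smul', ContinuousLinearMap.sub_apply,
    ContinuousLinearMap.smul_apply, ContinuousLinearMap.zero_apply,
    ContinuousLinearMap.comp_apply, ContinuousLinearMap.neg_apply,
    ContinuousLinearMap.id_apply, innerSL_apply_apply, Pi.smul_apply, smul_eq_mul,
    inner_sub_left, real_inner_smul_left, inner_neg_right, LamP,
    ContinuousLinearMap.coe_id', id_eq, two_smul, ContinuousLinearMap.add_apply]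
  field_simp
  ring

/-- Spacetime resonance set in the equal-speed case: empty when
`b_σ ≠ b_μ + b_ν`, and exactly the line bundle `{(ξ, ρξ)}` with `ρ = b_ν/b_σ`
when `b_σ = b_μ + b_ν`. -/
theorem statement9 (c bσ bμ bν : ℝ) (hc : 0 < c)
    (hσ : 0 < bσ) (hμ : 0 < bμ) (hν : 0 < bν) :
    (bσ ≠ bμ + bν → ∀ ξ η : E3,
      ¬(PhiEq c bσ bμ bν ξ η = 0 ∧
        gradient (fun y => PhiEq c bσ bμ bν ξ y) η = 0)) ∧
    (bσ = bμ + bν →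
      {p : E3 × E3 | PhiEq c bσ bμ bν p.1 p.2 = 0 ∧
          gradient (fun y => PhiEq c bσ bμ bν p.1 y) p.2 = 0} =
        {p : E3 × E3 | p.2 = (bν / bσ) • p.1}) := by
  constructor
  · rintro hne ξ η ⟨h1, h2⟩
    have hg := (phi_hasGradientAt c bσ bμ bν hμ hν ξ η).gradient
    exact hne (forward c bσ bμ bν hc hσ hμ hν ξ η h1 (hg.symm.trans h2)).1
  · intro hb
    ext ⟨ξ, η⟩
    simp only [Set.mem_setOf_eq]
    constructor
    · rintro ⟨h1, h2⟩
      have hg := (phi_hasGradientAt c bσ bμ bν hμ hν ξ η).gradient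
      exact (forward c bσ bμ bν hc hσ hμ hν ξ η h1 (hg.symm.trans h2)).2
    · intro h
      obtain ⟨hΦ, hG⟩ := backward c bσ bμ bν hc hσ hμ hν hb ξ
      refine ⟨by rw [h]; exact hΦ, ?_⟩
      subst h
      rw [(phi_hasGradientAt c bσ bμ bν hμ hν ξ ((bν / bσ) • ξ)).gradient]
      exact hG

end
end
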